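/- arXiv:1102.2883 — 4 statements merged into one kernel-verified Lean document; each statement's English description precedes it below -/
import Mathlib

section
/- For every κ ∈ ℤ_{>0} ∪ {∞}, the function H^max_κ is strictly concave on its domain (the interval [0,κ] for finite κ, and [0,∞) for κ = ∞): for all x ≠ y in the domain and α,β > 0 with α+β = 1, H^max_κ(αx+βy) > α·H^max_κ(x) + β·H^max_κ(y). -/
open Real Filter Finset

noncomputable section

/-- `ω(n) = n^n / n!`. -/
def omegaFn (n : ℕ) : ℝ := (n : ℝ) ^ n / (n.factorial : ℝ)

/-- `Ω(V)`: the sum of `ω(v)` over the entries of a vector `V`. -/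
def OmegaVec {I : Type*} [Fintype I] (V : I → ℕ) : ℝ := ∑ i, omegaFn (V i)

/-- `Ω(K)`: the sum of `ω(k)` over the entries of a matrix `K`. -/
def OmegaMat {I J : Type*} [Fintype I] [Fintype J] (K : I → J → ℕ) : ℝ :=
  ∑ i, ∑ j, omegaFn (K i j)

/-- `T_K(R,C)`: the number of nonnegative-integer matrices with row sums `R`,
column sums `C`, and entries bounded by `K` (a bound of `⊤` means unbounded). -/
def tableCount {I J : Type*} [Fintype I] [Fintype J]
    (K : I → J → ℕ∞) (R : I → ℕ) (C : J → ℕ) : ℕ :=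
  Set.ncard {A : I → J → ℕ |
    (∀ i, ∑ j, A i j = R i) ∧ (∀ j, ∑ i, A i j = C j) ∧ ∀ i j, (A i j : ℕ∞) ≤ K i j}

/-- The `s`-fold cloning of a margin vector. -/
def cloneVec {m : ℕ} (s : ℕ) (R : Fin m → ℕ) : Fin s × Fin m → ℕ :=
  fun p => s * R p.2

/-- The `s`-fold cloning of a bound matrix. -/
def cloneMat {m n : ℕ} (s : ℕ) (K : Fin m → Fin n → ℕ∞) :
    Fin s × Fin m → Fin s × Fin n → ℕ∞ :=
  fun p q => K p.2 q.2

/-- The mean of the truncated geometric distribution on `{0,…,κ}` with ratio `q`. -/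
def tgMean (κ : ℕ∞) (q : ℝ) : ℝ :=
  if κ = ⊤ then q / (1 - q)
  else (∑ t ∈ Finset.range (κ.toNat + 1), (t : ℝ) * q ^ t) /
    (∑ t ∈ Finset.range (κ.toNat + 1), q ^ t)

/-- The parameter `q(x;κ)` of the truncated geometric distribution `TG(x;κ)` with mean `x`. -/
def tgQ (κ : ℕ∞) (x : ℝ) : ℝ := sInf {q : ℝ | 0 ≤ q ∧ x ≤ tgMean κ q}

/-- The parameter `p(x;κ)` of the truncated geometric distribution `TG(x;κ)` with mean `x`. -/
def tgP (κ : ℕ∞) (x : ℝ) : ℝ :=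
  if κ = ⊤ then 1 - tgQ κ x
  else (∑ t ∈ Finset.range (κ.toNat + 1), tgQ κ x ^ t)⁻¹

/-- The probability mass function of `TG(x;κ)`: `Pr[X=t] = p q^t` for `t ∈ {0,…,κ}`. -/
def tgPMF (κ : ℕ∞) (x : ℝ) (t : ℕ) : ℝ :=
  if (t : ℕ∞) ≤ κ then tgP κ x * tgQ κ x ^ t else 0

/-- `H^max_κ(x)`: the (base-e) entropy of the truncated geometric distribution `TG(x;κ)`. -/
def Hmax (κ : ℕ∞) (x : ℝ) : ℝ := -∑' t : ℕ, tgPMF κ x t * Real.log (tgPMF κ x t)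

/-- The `(κ+1)`-nomial coefficient `(n choose r)_κ`: the coefficient of `x^r` in
`(1+x+⋯+x^κ)^n`; for `κ = ∞` it is `(r+n-1).choose r`. -/
def knomial (κ : ℕ∞) (n r : ℕ) : ℕ :=
  if κ = ⊤ then (r + n - 1).choose r
  else ((∑ t ∈ Finset.range (κ.toNat + 1), (Polynomial.X : Polynomial ℕ) ^ t) ^ n).coeff r

/-- The independence-heuristic estimate `I_κ(R,C)`. -/
def indepEst (κ : ℕ∞) {I J : Type*} [Fintype I] [Fintype J] (R : I → ℕ) (C : J → ℕ) : ℝ :=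
  ((knomial κ (Fintype.card I * Fintype.card J) (∑ i, R i) : ℝ))⁻¹ *
    (∏ i, (knomial κ (Fintype.card J) (R i) : ℝ)) *
    ∏ j, (knomial κ (Fintype.card I) (C j) : ℝ)

/-- The transportation polytope `Π_κ(R,C)` of real matrices with entries in `[0,κ]`,
row sums `R` and column sums `C`. -/
def transportPolytope (κ : ℕ∞) {m n : ℕ} (R : Fin m → ℕ) (C : Fin n → ℕ) :
    Set (Fin m → Fin n → ℝ) :=
  {Z | (∀ i j, 0 ≤ Z i j) ∧ (∀ i j, κ ≠ ⊤ → Z i j ≤ (κ.toNat : ℝ)) ∧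
    (∀ i, ∑ j, Z i j = (R i : ℝ)) ∧ ∀ j, ∑ i, Z i j = (C j : ℝ)}

/-- The generating function `G(x,y) = ∏_{i,j} (1 + x_i y_j + ⋯ + (x_i y_j)^{k_{ij}})`. -/
def genFun {m n : ℕ} (K : Fin m → Fin n → ℕ) (x : Fin m → ℝ) (y : Fin n → ℝ) : ℝ :=
  ∏ i, ∏ j, ∑ t ∈ Finset.range (K i j + 1), (x i * y j) ^ t

/-- The monomial `x^R = ∏_i x_i^{r_i}`. -/
def monom {m : ℕ} (x : Fin m → ℝ) (R : Fin m → ℕ) : ℝ := ∏ i, x i ^ R i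

/-- The concave roof function `f_K(R,C)`: the supremum of `∑_t α_t ln T_K(R^t,C^t)` over
convex combinations of integer margins averaging to `(R,C)` (and `⊥ = -∞` if none exist). -/
def fK {m n : ℕ} (K : Fin m → Fin n → ℕ) (R : Fin m → ℝ) (C : Fin n → ℝ) : EReal :=
  sSup {v : EReal | ∃ (p : ℕ) (α : Fin p → ℝ)
    (Rs : Fin p → Fin m → ℕ) (Cs : Fin p → Fin n → ℕ),
    1 ≤ p ∧ (∀ t, 0 ≤ α t) ∧ ∑ t, α t = 1 ∧
    (∀ i, ∑ t, α t * (Rs t i : ℝ) = R i) ∧ (∀ j, ∑ t, α t * (Cs t j : ℝ) = C j) ∧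
    (∀ t, 0 < tableCount (fun i j => (K i j : ℕ∞)) (Rs t) (Cs t)) ∧
    v = ((∑ t, α t * Real.log (tableCount (fun i j => (K i j : ℕ∞)) (Rs t) (Cs t)) : ℝ) : EReal)}

/-- `e^x` for an extended real `x`, with `e^{-∞} = 0`. -/
def expE (e : EReal) : ℝ := if e = ⊥ then 0 else Real.exp e.toReal

end

noncomputable section
namespace HmaxStrictConcaveAux
open Real

def Sfin (N : ℕ) (q : ℝ) : ℝ := ∑ t ∈ Finset.range (N + 1), q ^ t
def Mfin (N : ℕ) (q : ℝ) : ℝ := ∑ t ∈ Finset.range (N + 1), (t : ℝ) * q ^ t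

lemma one_le_Sfin (N : ℕ) {q : ℝ} (hq : 0 ≤ q) : 1 ≤ Sfin N q := by
  rw [Sfin, Finset.sum_range_succ']
  have h1 : (0:ℝ) ≤ ∑ i ∈ Finset.range N, q ^ (i + 1) :=
    Finset.sum_nonneg fun i _ => pow_nonneg hq _
  simp only [pow_zero]
  linarith

lemma Sfin_pos (N : ℕ) {q : ℝ} (hq : 0 ≤ q) : 0 < Sfin N q :=
  lt_of_lt_of_le one_pos (one_le_Sfin N hq)

lemma Sfin_zero (N : ℕ) : Sfin N 0 = 1 := by
  rw [Sfin, Finset.sum_range_succ']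
  simp

lemma Mfin_zero (N : ℕ) : Mfin N 0 = 0 := by
  rw [Mfin]
  apply Finset.sum_eq_zero
  intro t _
  cases t with
  | zero => simp
  | succ n => simp [zero_pow]

lemma Mfin_lt (N : ℕ) (hN : 1 ≤ N) {q : ℝ} (hq : 0 ≤ q) :
    Mfin N q < (N : ℝ) * Sfin N q := by
  rw [Mfin, Sfin, Finset.mul_sum]
  apply Finset.sum_lt_sum
  · intro t ht
    apply mul_le_mul_of_nonneg_right _ (pow_nonneg hq _)
    exact_mod_cast Nat.lt_succ_iff.mp (Finset.mem_range.mp ht)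
  · refine ⟨0, Finset.mem_range.mpr (Nat.succ_pos N), ?_⟩
    simp only [Nat.cast_zero, pow_zero, mul_one, zero_mul]
    exact_mod_cast hN

lemma Sfin_gt_pow (N : ℕ) (hN : 1 ≤ N) {q : ℝ} (hq : 0 ≤ q) : q ^ N < Sfin N q := by
  rw [Sfin, Finset.sum_range_succ]
  have h1 : (1:ℝ) ≤ ∑ t ∈ Finset.range N, q ^ t := by
    have := Finset.single_le_sum (f := fun t => q ^ t)
      (fun t _ => pow_nonneg hq t) (Finset.mem_range.mpr hN)
    simpa using this
  linarith

lemma one_lt_Sfin (N : ℕ) (hN : 1 ≤ N) {q : ℝ} (hq : 0 < q) : 1 < Sfin N q := by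
  rw [Sfin, Finset.sum_range_succ]
  have h1 : (1:ℝ) ≤ ∑ t ∈ Finset.range N, q ^ t := by
    have := Finset.single_le_sum (f := fun t => q ^ t)
      (fun t _ => pow_nonneg hq.le t) (Finset.mem_range.mpr hN)
    simpa using this
  have : 0 < q ^ N := pow_pos hq N
  linarith

/-- strict monotonicity of the mean, in cross-multiplied form -/
lemma cross (N : ℕ) (hN : 1 ≤ N) {q1 q2 : ℝ} (h0 : 0 ≤ q1) (h12 : q1 < q2) :
    Mfin N q1 * Sfin N q2 < Mfin N q2 * Sfin N q1 := by
  classical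
  set D := Finset.range (N + 1) ×ˢ Finset.range (N + 1) with hD
  set d : ℕ × ℕ → ℝ := fun p => ((p.2 : ℝ) - p.1) * q1 ^ p.1 * q2 ^ p.2 with hd
  -- ∑ d = M2 * S1 - M1 * S2
  have hsum : ∑ p ∈ D, d p = Mfin N q2 * Sfin N q1 - Mfin N q1 * Sfin N q2 := by
    have e1 : ∑ p ∈ D, ((p.2 : ℝ) * q2 ^ p.2) * q1 ^ p.1
        = Mfin N q2 * Sfin N q1 := by
      rw [hD, Finset.sum_product, Mfin, Sfin, Finset.sum_mul]
      rw [Finset.sum_comm]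
      apply Finset.sum_congr rfl
      intro s _
      rw [Finset.mul_sum]
    have e2 : ∑ p ∈ D, ((p.1 : ℝ) * q1 ^ p.1) * q2 ^ p.2
        = Mfin N q1 * Sfin N q2 := by
      rw [hD, Finset.sum_product, Mfin, Sfin, Finset.sum_mul]
      congr 1
      ext t
      rw [Finset.mul_sum]
    rw [← e1, ← e2, ← Finset.sum_sub_distrib]
    congr 1
    ext p
    rw [hd]
    ring
  -- swap invariance
  have hswap : ∑ p ∈ D, d p.swap = ∑ p ∈ D, d p := by
    apply Finset.sum_nbij' (i := Prod.swap) (j := Prod.swap)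
    · intro p hp
      rw [hD, Finset.mem_product] at hp ⊢
      exact ⟨hp.2, hp.1⟩
    · intro p hp
      rw [hD, Finset.mem_product] at hp ⊢
      exact ⟨hp.2, hp.1⟩
    · intro p _; simp
    · intro p _; simp
    · intro p _; simp
  -- each d p + d p.swap ≥ 0, strictly positive at (0,1)
  have hterm : ∀ p ∈ D, (0:ℝ) ≤ d p + d p.swap := by
    rintro ⟨t, s⟩ _
    simp only [hd, Prod.swap_prod_mk]
    have hq2 : (0:ℝ) ≤ q2 := le_trans h0 h12.le
    have key : ∀ t s : ℕ, t ≤ s → q1 ^ s * q2 ^ t ≤ q1 ^ t * q2 ^ s := by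
      intro t s hts
      have h1 : q1 ^ s = q1 ^ t * q1 ^ (s - t) := by
        rw [← pow_add]; congr 1; omega
      have h2 : q2 ^ s = q2 ^ t * q2 ^ (s - t) := by
        rw [← pow_add]; congr 1; omega
      have hple : q1 ^ (s - t) ≤ q2 ^ (s - t) := pow_le_pow_left₀ h0 h12.le _
      calc q1 ^ s * q2 ^ t = (q1 ^ t * q2 ^ t) * q1 ^ (s - t) := by rw [h1]; ring
        _ ≤ (q1 ^ t * q2 ^ t) * q2 ^ (s - t) := by
            apply mul_le_mul_of_nonneg_left hple
            exact mul_nonneg (pow_nonneg h0 t) (pow_nonneg hq2 t)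
        _ = q1 ^ t * q2 ^ s := by rw [h2]; ring
    rcases le_total t s with h | h
    · have hk := key t s h
      have hst : (0:ℝ) ≤ (s : ℝ) - t := by
        have : (t:ℝ) ≤ s := by exact_mod_cast h
        linarith
      nlinarith [mul_nonneg hst (sub_nonneg.mpr hk)]
    · have hk := key s t h
      have hst : (0:ℝ) ≤ (t : ℝ) - s := by
        have : (s:ℝ) ≤ t := by exact_mod_cast h
        linarith
      nlinarith [mul_nonneg hst (sub_nonneg.mpr hk)]
  have hmem : ((0:ℕ), (1:ℕ)) ∈ D := by
    rw [hD, Finset.mem_product]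
    constructor <;> (rw [Finset.mem_range]; omega)
  have hstrict : (0:ℝ) < d (0, 1) + d (0, 1).swap := by
    simp only [hd, Prod.swap_prod_mk]
    norm_num
    linarith
  have hpos : (0:ℝ) < ∑ p ∈ D, (d p + d p.swap) := by
    have := Finset.sum_lt_sum (f := fun _ : ℕ × ℕ => (0:ℝ)) (g := fun p => d p + d p.swap)
      (fun p hp => hterm p hp) ⟨(0,1), hmem, hstrict⟩
    simpa using this
  rw [Finset.sum_add_distrib, hswap] at hpos
  linarith



lemma exists_mean_eq (N : ℕ) (hN : 1 ≤ N) {z : ℝ} (hz0 : 0 ≤ z) (hzN : z < N) :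
    ∃ q, 0 ≤ q ∧ Mfin N q / Sfin N q = z := by
  have hNz : (0:ℝ) < N - z := by linarith
  set Q : ℝ := max 1 ((N:ℝ) * N / ((N:ℝ) - z)) with hQdef
  have hQ1 : (1:ℝ) ≤ Q := le_max_left _ _
  have hQ0 : (0:ℝ) ≤ Q := by linarith
  have hQb : (N:ℝ) * N / ((N:ℝ) - z) ≤ Q := le_max_right _ _
  have hQN2 : (N:ℝ) * N ≤ ((N:ℝ) - z) * Q := by
    rw [div_le_iff₀ hNz] at hQb; linarith
  have hclaim : z ≤ Mfin N Q / Sfin N Q := by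
    rw [le_div_iff₀ (Sfin_pos N hQ0)]
    have key : 0 ≤ ∑ t ∈ Finset.range (N + 1), ((t:ℝ) - z) * Q ^ t := by
      rw [Finset.sum_range_succ]
      have hb : ∀ t ∈ Finset.range N, -((N:ℝ) * Q ^ (N - 1)) ≤ ((t:ℝ) - z) * Q ^ t := by
        intro t ht
        have htN : t ≤ N - 1 := by have := Finset.mem_range.mp ht; omega
        have hpow : Q ^ t ≤ Q ^ (N - 1) := pow_le_pow_right₀ hQ1 htN
        have hQt0 : (0:ℝ) ≤ Q ^ t := pow_nonneg hQ0 t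
        have h1 : z * Q ^ t ≤ (N:ℝ) * Q ^ (N - 1) := by
          apply mul_le_mul (by linarith) hpow hQt0 (by positivity)
        nlinarith [mul_nonneg (Nat.cast_nonneg t : (0:ℝ) ≤ (t:ℝ)) hQt0]
      have hsum := Finset.sum_le_sum hb
      rw [Finset.sum_const, Finset.card_range, nsmul_eq_mul] at hsum
      have hlast : (N:ℝ) * ((N:ℝ) * Q ^ (N - 1)) ≤ ((N:ℝ) - z) * Q ^ N := by
        have hQN : Q ^ N = Q ^ (N - 1) * Q := by rw [← pow_succ]; congr 1; omega
        rw [hQN]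
        calc (N:ℝ) * ((N:ℝ) * Q ^ (N - 1)) = ((N:ℝ) * N) * Q ^ (N - 1) := by ring
          _ ≤ (((N:ℝ) - z) * Q) * Q ^ (N - 1) :=
              mul_le_mul_of_nonneg_right hQN2 (by positivity)
          _ = ((N:ℝ) - z) * (Q ^ (N - 1) * Q) := by ring
      have hNQ : ((N:ℝ) - z) * Q ^ N ≤ ((N:ℝ) - z) * Q ^ N := le_refl _
      nlinarith
    have hdiff : Mfin N Q - z * Sfin N Q = ∑ t ∈ Finset.range (N + 1), ((t:ℝ) - z) * Q ^ t := by
      rw [Mfin, Sfin, Finset.mul_sum, ← Finset.sum_sub_distrib]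
      exact Finset.sum_congr rfl fun t _ => by ring
    linarith
  have hcM : Continuous fun q : ℝ => Mfin N q := by
    unfold Mfin
    exact continuous_finset_sum _ fun t _ => continuous_const.mul (continuous_pow t)
  have hcS : Continuous fun q : ℝ => Sfin N q := by
    unfold Sfin
    exact continuous_finset_sum _ fun t _ => continuous_pow t
  have hcont : ContinuousOn (fun q => Mfin N q / Sfin N q) (Set.Icc 0 Q) := by
    apply ContinuousOn.div hcM.continuousOn hcS.continuousOn
    intro q hq
    exact (Sfin_pos N hq.1).ne'
  have h0 : Mfin N 0 / Sfin N 0 = 0 := by rw [Mfin_zero, Sfin_zero]; simp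
  have hzmem : z ∈ Set.Icc ((fun q => Mfin N q / Sfin N q) 0) ((fun q => Mfin N q / Sfin N q) Q) := by
    simp only [h0]
    exact ⟨hz0, hclaim⟩
  obtain ⟨q, hq, hfq⟩ := intermediate_value_Icc hQ0 hcont hzmem
  exact ⟨q, hq.1, hfq⟩

/-- The Gibbs inequality for the finite truncated geometric family. -/
lemma gibbs_fin (N : ℕ) (hN : 1 ≤ N) {q1 q2 : ℝ} (h1 : 0 < q1) (h2 : 0 < q2)
    (hne : q1 ≠ q2) :
    log (Sfin N q1) - (Mfin N q1 / Sfin N q1) * log q1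
      < log (Sfin N q2) - (Mfin N q1 / Sfin N q1) * log q2 := by
  set w := Mfin N q1 / Sfin N q1 with hw
  set r := q2 / q1 with hr
  have hr0 : 0 < r := by positivity
  have hr1 : r ≠ 1 := by
    rw [hr]
    intro h
    exact hne ((div_eq_one_iff_eq h1.ne').mp h).symm
  set L := log r with hL
  have hL0 : L ≠ 0 := by
    rw [hL]
    simp only [ne_eq, log_eq_zero]
    push_neg
    exact ⟨hr0.ne', hr1, by linarith⟩
  have hS1 : 0 < Sfin N q1 := Sfin_pos N h1.le
  have hMS : Mfin N q1 = w * Sfin N q1 := by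
    rw [hw, div_mul_cancel₀ _ hS1.ne']
  -- termwise tangent-line bound
  have hterm : ∀ t ∈ Finset.range (N + 1),
      q1 ^ t * (r ^ w * (1 + ((t:ℝ) - w) * L)) ≤ q2 ^ t := by
    intro t _
    have hq2t : q2 ^ t = q1 ^ t * (r ^ w * Real.exp (((t:ℝ) - w) * L)) := by
      have h1' : q2 = q1 * r := by rw [hr]; field_simp
      rw [h1', mul_pow]
      congr 1
      rw [← Real.rpow_natCast r t]
      rw [← Real.exp_log (x := r ^ (t:ℝ)) (Real.rpow_pos_of_pos hr0 _)]
      rw [Real.log_rpow hr0]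
      rw [← Real.exp_log (x := r ^ w) (Real.rpow_pos_of_pos hr0 _), Real.log_rpow hr0]
      rw [← Real.exp_add]
      congr 1
      ring
    rw [hq2t]
    apply mul_le_mul_of_nonneg_left _ (pow_nonneg h1.le t)
    apply mul_le_mul_of_nonneg_left _ (Real.rpow_pos_of_pos hr0 w).le
    have := Real.add_one_le_exp (((t:ℝ) - w) * L)
    linarith
  -- strictness at a suitable index
  obtain ⟨t₀, ht₀mem, ht₀⟩ : ∃ t₀, t₀ ∈ Finset.range (N + 1) ∧ ((t₀:ℝ) - w) * L ≠ 0 := by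
    by_cases hw0 : (0:ℝ) = w
    · exact ⟨1, Finset.mem_range.mpr (by omega), by
        simp only [Nat.cast_one]
        intro h
        rcases mul_eq_zero.mp h with h' | h'
        · rw [← hw0] at h'; norm_num at h'
        · exact hL0 h'⟩
    · exact ⟨0, Finset.mem_range.mpr (by omega), by
        simp only [Nat.cast_zero]
        intro h
        rcases mul_eq_zero.mp h with h' | h'
        · exact hw0 (by linarith)
        · exact hL0 h'⟩
  have hstrict : q1 ^ t₀ * (r ^ w * (1 + ((t₀:ℝ) - w) * L)) < q2 ^ t₀ := by
    have hq2t : q2 ^ t₀ = q1 ^ t₀ * (r ^ w * Real.exp (((t₀:ℝ) - w) * L)) := by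
      have h1' : q2 = q1 * r := by rw [hr]; field_simp
      rw [h1', mul_pow]
      congr 1
      rw [← Real.rpow_natCast r t₀]
      rw [← Real.exp_log (x := r ^ (t₀:ℝ)) (Real.rpow_pos_of_pos hr0 _)]
      rw [Real.log_rpow hr0]
      rw [← Real.exp_log (x := r ^ w) (Real.rpow_pos_of_pos hr0 _), Real.log_rpow hr0]
      rw [← Real.exp_add]
      congr 1
      ring
    rw [hq2t]
    apply mul_lt_mul_of_pos_left _ (pow_pos h1 t₀)
    apply mul_lt_mul_of_pos_left _ (Real.rpow_pos_of_pos hr0 w)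
    have := Real.add_one_lt_exp ht₀
    linarith
  have hsum : ∑ t ∈ Finset.range (N + 1), q1 ^ t * (r ^ w * (1 + ((t:ℝ) - w) * L))
      < Sfin N q2 := by
    rw [Sfin]
    exact Finset.sum_lt_sum hterm ⟨t₀, ht₀mem, hstrict⟩
  have hsum_eq : ∑ t ∈ Finset.range (N + 1), q1 ^ t * (r ^ w * (1 + ((t:ℝ) - w) * L))
      = r ^ w * Sfin N q1 := by
    have expand : ∀ t : ℕ, q1 ^ t * (r ^ w * (1 + ((t:ℝ) - w) * L))
        = (r ^ w * (1 - w * L)) * q1 ^ t + (r ^ w * L) * ((t:ℝ) * q1 ^ t) := by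
      intro t; ring
    rw [Finset.sum_congr rfl fun t _ => expand t, Finset.sum_add_distrib,
      ← Finset.mul_sum, ← Finset.mul_sum, ← Sfin, ← Mfin, hMS]
    ring
  rw [hsum_eq] at hsum
  have hlog : w * L + log (Sfin N q1) < log (Sfin N q2) := by
    have := Real.log_lt_log (by positivity) hsum
    rwa [Real.log_mul (Real.rpow_pos_of_pos hr0 w).ne' hS1.ne', Real.log_rpow hr0] at this
  have hLq : L = log q2 - log q1 := by
    rw [hL, hr, Real.log_div h2.ne' h1.ne']
  rw [hLq] at hlog
  nlinarith

lemma tgQ_top (w : ℝ) (hw : 0 ≤ w) : tgQ ⊤ w = w / (1 + w) := by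
  have h1w : (0:ℝ) < 1 + w := by linarith
  apply IsLeast.csInf_eq
  constructor
  · refine ⟨by positivity, ?_⟩
    have : tgMean ⊤ (w / (1 + w)) = w := by
      rw [tgMean, if_pos rfl]
      have : 1 - w / (1 + w) = 1 / (1 + w) := by field_simp; ring
      rw [this]
      field_simp
    rw [this]
  · rintro q ⟨hq0, hq⟩
    rw [tgMean, if_pos rfl] at hq
    rcases lt_or_ge q 1 with h | h
    · rw [div_le_iff₀ h1w]
      have h1q : (0:ℝ) < 1 - q := by linarith
      rw [le_div_iff₀ h1q] at hq
      nlinarith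
    · have : w / (1 + w) < 1 := by rw [div_lt_iff₀ h1w]; linarith
      linarith

lemma Hmax_top (w : ℝ) (hw : 0 < w) :
    Hmax ⊤ w = -(w * log (w / (1 + w))) - log (1 - w / (1 + w)) := by
  have h1w : (0:ℝ) < 1 + w := by linarith
  set q := w / (1 + w) with hqdef
  have hq0 : 0 < q := by positivity
  have hq1 : q < 1 := by rw [hqdef, div_lt_iff₀ h1w]; linarith
  have hp : (0:ℝ) < 1 - q := by linarith
  have hQ : tgQ ⊤ w = q := tgQ_top w hw.le
  have hmean : q / (1 - q) = w := by
    have : 1 - q = 1 / (1 + w) := by rw [hqdef]; field_simp; ring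
    rw [this, hqdef]; field_simp
  have hpmf : ∀ t : ℕ, tgPMF ⊤ w t = (1 - q) * q ^ t := by
    intro t
    rw [tgPMF, if_pos le_top, tgP, if_pos rfl, hQ]
  have key : ∀ t : ℕ, tgPMF ⊤ w t * log (tgPMF ⊤ w t)
      = ((1 - q) * log (1 - q)) * q ^ t + ((1 - q) * log q) * ((t : ℝ) * q ^ t) := by
    intro t
    rw [hpmf t, log_mul hp.ne' (pow_ne_zero _ hq0.ne'), log_pow]
    ring
  have s1 : Summable (fun t : ℕ => ((1 - q) * log (1 - q)) * q ^ t) :=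
    (summable_geometric_of_lt_one hq0.le hq1).mul_left _
  have s2 : Summable (fun t : ℕ => ((1 - q) * log q) * ((t : ℝ) * q ^ t)) := by
    apply Summable.mul_left
    have := summable_pow_mul_geometric_of_norm_lt_one (R := ℝ) 1 (r := q)
      (by rwa [Real.norm_eq_abs, abs_of_pos hq0])
    simpa using this
  have ht1 : ∑' t : ℕ, ((1 - q) * log (1 - q)) * q ^ t = (1 - q) * log (1 - q) * (1 - q)⁻¹ := by
    rw [tsum_mul_left, tsum_geometric_of_lt_one hq0.le hq1]
  have ht2 : ∑' t : ℕ, ((1 - q) * log q) * ((t : ℝ) * q ^ t)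
      = (1 - q) * log q * (q / (1 - q) ^ 2) := by
    rw [tsum_mul_left]
    congr 1
    have := tsum_coe_mul_geometric_of_norm_lt_one (𝕜 := ℝ) (r := q)
      (by rwa [Real.norm_eq_abs, abs_of_pos hq0])
    simpa using this
  rw [Hmax]
  rw [tsum_congr key, s1.tsum_add s2, ht1, ht2]
  have e1 : (1 - q) * log (1 - q) * (1 - q)⁻¹ = log (1 - q) := by field_simp
  have e2 : (1 - q) * log q * (q / (1 - q) ^ 2) = log q * (q / (1 - q)) := by
    field_simp
  rw [e1, e2, hmean]
  ring

lemma Hmax_top_zero : Hmax ⊤ 0 = 0 := by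
  have hQ : tgQ ⊤ 0 = 0 := by
    have := tgQ_top 0 le_rfl
    simpa using this
  have : ∀ t : ℕ, tgPMF ⊤ 0 t * log (tgPMF ⊤ 0 t) = 0 := by
    intro t
    rw [tgPMF, if_pos le_top, tgP, if_pos rfl, hQ]
    cases t with
    | zero => simp
    | succ n => simp [zero_pow]
  rw [Hmax, tsum_congr this, tsum_zero, neg_zero]


-- strict minimality of ψ(u) = -(w log u) - log(1-u) at u₀ = w/(1+w)
lemma gibbs_top (w u : ℝ) (hw : 0 ≤ w) (hu0 : 0 < u) (hu1 : u < 1)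
    (hne : u ≠ w / (1 + w)) :
    -(w * log (w / (1 + w))) - log (1 - w / (1 + w)) < -(w * log u) - log (1 - u) := by
  have h1w : (0:ℝ) < 1 + w := by linarith
  set u₀ := w / (1 + w) with hu₀
  have hu₀0 : 0 ≤ u₀ := by positivity
  have hu₀1 : u₀ < 1 := by rw [hu₀, div_lt_iff₀ h1w]; linarith
  have h1u : (0:ℝ) < 1 - u := by linarith
  have h1u₀ : (0:ℝ) < 1 - u₀ := by linarith
  rcases eq_or_lt_of_le hw with hw0 | hw0
  · -- w = 0
    have : u₀ = 0 := by rw [hu₀, ← hw0]; simp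
    rw [this, ← hw0]
    simp only [zero_mul, neg_zero, log_one, sub_self, zero_sub, sub_zero]
    have : log (1 - u) < 0 := log_neg h1u (by linarith)
    linarith
  · have hu₀pos : 0 < u₀ := by positivity
    have hA : log (u / u₀) < u / u₀ - 1 := by
      apply log_lt_sub_one_of_pos (by positivity)
      intro h
      exact hne (by rwa [div_eq_one_iff_eq hu₀pos.ne'] at h)
    have hB : log ((1 - u) / (1 - u₀)) ≤ (1 - u) / (1 - u₀) - 1 :=
      log_le_sub_one_of_pos (by positivity)
    rw [log_div hu0.ne' hu₀pos.ne'] at hA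
    rw [log_div h1u.ne' h1u₀.ne'] at hB
    have hzero : w * (u / u₀ - 1) + ((1 - u) / (1 - u₀) - 1) = 0 := by
      rw [hu₀]
      field_simp
      ring
    nlinarith [mul_lt_mul_of_pos_left hA hw0]



lemma tgMean_fin (κ : ℕ∞) (hκ : κ ≠ ⊤) (q : ℝ) :
    tgMean κ q = Mfin κ.toNat q / Sfin κ.toNat q := by
  rw [tgMean, if_neg hκ]; rfl

lemma tgMean_fin_zero (κ : ℕ∞) (hκ : κ ≠ ⊤) : tgMean κ 0 = 0 := by
  rw [tgMean_fin κ hκ, Mfin_zero, Sfin_zero]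
  simp

lemma tgQ_spec (κ : ℕ∞) (hκ : κ ≠ ⊤) (hN : 1 ≤ κ.toNat) {z : ℝ} (hz0 : 0 ≤ z)
    (hzN : z < (κ.toNat : ℝ)) :
    0 ≤ tgQ κ z ∧ tgMean κ (tgQ κ z) = z := by
  have hzN' : z < κ.toNat := hzN
  obtain ⟨q₀, hq₀0, hq₀⟩ := exists_mean_eq κ.toNat hN hz0 hzN'
  have hleast : IsLeast {q : ℝ | 0 ≤ q ∧ z ≤ tgMean κ q} q₀ := by
    constructor
    · exact ⟨hq₀0, by rw [tgMean_fin κ hκ, hq₀]⟩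
    · rintro q ⟨hq0, hq⟩
      by_contra hlt
      push_neg at hlt
      have hcross := cross κ.toNat hN hq0 hlt
      rw [tgMean_fin κ hκ] at hq
      have hSq := Sfin_pos κ.toNat hq0
      have hSq₀ := Sfin_pos κ.toNat hq₀0
      rw [le_div_iff₀ hSq] at hq
      rw [div_eq_iff hSq₀.ne'] at hq₀
      nlinarith
  have heq : tgQ κ z = q₀ := hleast.csInf_eq
  refine ⟨heq ▸ hq₀0, ?_⟩
  rw [heq, tgMean_fin κ hκ, hq₀]

lemma tgQ_boundary (κ : ℕ∞) (hκ : κ ≠ ⊤) (hN : 1 ≤ κ.toNat) :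
    tgQ κ ((κ.toNat : ℝ)) = 0 := by
  have hempty : {q : ℝ | 0 ≤ q ∧ ((κ.toNat : ℝ)) ≤ tgMean κ q} = ∅ := by
    ext q
    simp only [Set.mem_setOf_eq, Set.mem_empty_iff_false, iff_false, not_and]
    intro hq0 hq
    have hlt := Mfin_lt κ.toNat hN hq0
    rw [tgMean_fin κ hκ, le_div_iff₀ (Sfin_pos _ hq0)] at hq
    linarith
  rw [tgQ, hempty, Real.sInf_empty]

lemma Hmax_fin_zero (κ : ℕ∞) (hκ : κ ≠ ⊤) (w : ℝ) (hq : tgQ κ w = 0) :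
    Hmax κ w = 0 := by
  have hS : (∑ t ∈ Finset.range (κ.toNat + 1), (0:ℝ) ^ t) = 1 := Sfin_zero κ.toNat
  have hzero : ∀ t : ℕ, tgPMF κ w t * Real.log (tgPMF κ w t) = 0 := by
    intro t
    rw [tgPMF, tgP, if_neg hκ, hq]
    cases t with
    | zero =>
      split
      · rw [hS]; simp
      · simp
    | succ n =>
      split
      · rw [zero_pow (Nat.succ_ne_zero n)]; simp
      · simp
  rw [Hmax, tsum_congr hzero, tsum_zero, neg_zero]

lemma Hmax_fin (κ : ℕ∞) (hκ : κ ≠ ⊤) (w : ℝ) (hq : 0 < tgQ κ w) :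
    Hmax κ w = Real.log (Sfin κ.toNat (tgQ κ w))
      - tgMean κ (tgQ κ w) * Real.log (tgQ κ w) := by
  set N := κ.toNat with hNdef
  set q := tgQ κ w with hqdef
  have hS : 0 < Sfin N q := Sfin_pos N hq.le
  have hP : tgP κ w = (Sfin N q)⁻¹ := by rw [tgP, if_neg hκ]; rfl
  have hcond : ∀ t : ℕ, ((t : ℕ∞) ≤ κ ↔ t ≤ N) := by
    intro t
    rw [← ENat.coe_toNat hκ, ← hNdef, Nat.cast_le]
  have hvanish : ∀ t ∉ Finset.range (N + 1), tgPMF κ w t * Real.log (tgPMF κ w t) = 0 := by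
    intro t ht
    rw [Finset.mem_range, Nat.lt_succ_iff] at ht
    rw [tgPMF, if_neg (fun h => ht ((hcond t).mp h))]
    simp
  have hterm : ∀ t ∈ Finset.range (N + 1), tgPMF κ w t * Real.log (tgPMF κ w t)
      = (-(Real.log (Sfin N q)) * (Sfin N q)⁻¹) * q ^ t
        + (Real.log q * (Sfin N q)⁻¹) * ((t : ℝ) * q ^ t) := by
    intro t ht
    rw [Finset.mem_range, Nat.lt_succ_iff] at ht
    rw [tgPMF, if_pos ((hcond t).mpr ht), hP]
    rw [Real.log_mul (inv_ne_zero hS.ne') (pow_ne_zero _ hq.ne'), Real.log_inv,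
      Real.log_pow]
    ring
  rw [Hmax, tsum_eq_sum hvanish, Finset.sum_congr rfl hterm, Finset.sum_add_distrib,
    ← Finset.mul_sum, ← Finset.mul_sum]
  have e1 : ∑ t ∈ Finset.range (N + 1), q ^ t = Sfin N q := rfl
  have e2 : ∑ t ∈ Finset.range (N + 1), (t : ℝ) * q ^ t = Mfin N q := rfl
  rw [e1, e2, tgMean_fin κ hκ, ← hNdef]
  field_simp
  ring

end HmaxStrictConcaveAux
end

/-- **Lemma.** `H^max_κ` is strictly concave on its domain `[0,κ]`
(`[0,∞)` when `κ = ∞`). -/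
theorem Hmax_strictConcave (κ : ℕ∞) (hκ : 1 ≤ κ) (x y : ℝ)
    (hx0 : 0 ≤ x) (hxκ : κ ≠ ⊤ → x ≤ (κ.toNat : ℝ))
    (hy0 : 0 ≤ y) (hyκ : κ ≠ ⊤ → y ≤ (κ.toNat : ℝ))
    (hxy : x ≠ y) (a b : ℝ) (ha : 0 < a) (hb : 0 < b) (hab : a + b = 1) :
    a * Hmax κ x + b * Hmax κ y < Hmax κ (a * x + b * y) := by
  classical
  open HmaxStrictConcaveAux in
  rcases eq_or_ne κ ⊤ with rfl | hfin
  · -- infinite case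
    set z := a * x + b * y with hz
    have hxz : x ≠ z := by
      intro h
      rw [hz] at h
      exact hxy (mul_left_cancel₀ hb.ne' (by linear_combination h + x * hab))
    have hyz : y ≠ z := by
      intro h
      rw [hz] at h
      exact hxy (mul_left_cancel₀ ha.ne'
        ((by linear_combination h + y * hab : a * y = a * x))).symm
    have hzpos : 0 < z := by
      rcases hxy.lt_or_gt with h | h <;> nlinarith
    have h1z : (0:ℝ) < 1 + z := by linarith
    set u := z / (1 + z) with hu
    have hu0 : 0 < u := by positivity
    have hu1 : u < 1 := by rw [hu, div_lt_iff₀ h1z]; linarith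
    have hH : ∀ w : ℝ, 0 ≤ w →
        Hmax ⊤ w = -(w * Real.log (w / (1 + w))) - Real.log (1 - w / (1 + w)) := by
      intro w hw
      rcases eq_or_lt_of_le hw with h0 | h0
      · rw [← h0, Hmax_top_zero]
        norm_num
      · exact Hmax_top w h0
    have hHz : Hmax ⊤ z = -(z * Real.log u) - Real.log (1 - u) := hH z hzpos.le
    have key : ∀ w : ℝ, 0 ≤ w → w ≠ z →
        Hmax ⊤ w < -(w * Real.log u) - Real.log (1 - u) := by
      intro w hw hwz
      have h1w : (0:ℝ) < 1 + w := by linarith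
      have hne : u ≠ w / (1 + w) := by
        rw [hu]
        intro hEq
        apply hwz
        rw [div_eq_div_iff h1z.ne' h1w.ne'] at hEq
        linear_combination -hEq
      rw [hH w hw]
      exact gibbs_top w u hw hu0 hu1 hne
    have k1 := key x hx0 hxz
    have k2 := key y hy0 hyz
    have hsum : a * Hmax ⊤ x + b * Hmax ⊤ y
        < a * (-(x * Real.log u) - Real.log (1 - u))
          + b * (-(y * Real.log u) - Real.log (1 - u)) :=
      add_lt_add (mul_lt_mul_of_pos_left k1 ha) (mul_lt_mul_of_pos_left k2 hb)
    rw [hHz]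
    calc a * Hmax ⊤ x + b * Hmax ⊤ y
        < a * (-(x * Real.log u) - Real.log (1 - u))
          + b * (-(y * Real.log u) - Real.log (1 - u)) := hsum
      _ = -(z * Real.log u) - Real.log (1 - u) := by
          rw [hz]; linear_combination (-(Real.log (1 - u))) * hab
  · -- finite case
    have hN : 1 ≤ κ.toNat := by
      rcases Nat.eq_zero_or_pos κ.toNat with h | h
      · exfalso
        have : κ = 0 := by
          rw [← ENat.coe_toNat hfin, h]; rfl
        rw [this] at hκ
        exact absurd hκ (by norm_num)
      · exact h
    have hxN : x ≤ (κ.toNat : ℝ) := hxκ hfin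
    have hyN : y ≤ (κ.toNat : ℝ) := hyκ hfin
    set N := κ.toNat with hNdef
    set z := a * x + b * y with hz
    have hxz : x ≠ z := by
      intro h
      rw [hz] at h
      exact hxy (mul_left_cancel₀ hb.ne' (by linear_combination h + x * hab))
    have hyz : y ≠ z := by
      intro h
      rw [hz] at h
      exact hxy (mul_left_cancel₀ ha.ne'
        ((by linear_combination h + y * hab : a * y = a * x))).symm
    have hzpos : 0 < z := by
      rcases hxy.lt_or_gt with h | h <;> nlinarith
    have hzN : z < (N : ℝ) := by
      rcases hxy.lt_or_gt with h | h <;> nlinarith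
    obtain ⟨hq0, hqmean⟩ := tgQ_spec κ hfin hN hzpos.le hzN
    have hqpos : 0 < tgQ κ z := by
      rcases eq_or_lt_of_le hq0 with h | h
      · exfalso
        rw [← h, tgMean_fin_zero κ hfin] at hqmean
        linarith
      · exact h
    set q := tgQ κ z with hqdef
    have hHz : Hmax κ z = Real.log (Sfin N q) - z * Real.log q := by
      rw [Hmax_fin κ hfin z hqpos, hqmean]
    have key : ∀ w : ℝ, 0 ≤ w → w ≤ (N : ℝ) → w ≠ z →
        Hmax κ w < Real.log (Sfin N q) - w * Real.log q := by
      intro w hw0 hwN hwz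
      rcases eq_or_lt_of_le hwN with hEq | hlt
      · -- w = N
        rw [hEq, Hmax_fin_zero κ hfin _ (tgQ_boundary κ hfin hN)]
        have hpow := Sfin_gt_pow N hN hqpos.le
        have hlog := Real.log_lt_log (pow_pos hqpos N) hpow
        rw [Real.log_pow] at hlog
        linarith
      · obtain ⟨hp0, hpmean⟩ := tgQ_spec κ hfin hN hw0 hlt
        rcases eq_or_lt_of_le hp0 with h0 | h0
        · -- tgQ κ w = 0, hence w = 0
          have hw_eq : w = 0 := by
            rw [← h0, tgMean_fin_zero κ hfin] at hpmean
            linarith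
          rw [Hmax_fin_zero κ hfin w h0.symm, hw_eq]
          have hS1 := one_lt_Sfin N hN hqpos
          have := Real.log_pos hS1
          linarith
        · have hne : tgQ κ w ≠ q := by
            intro h
            exact hwz (by rw [← hpmean, h, hqmean])
          have hg := gibbs_fin N hN h0 hqpos hne
          rw [Hmax_fin κ hfin w h0, hpmean]
          rw [tgMean_fin κ hfin, ← hNdef] at hpmean
          rw [hpmean] at hg
          exact hg
    have k1 := key x hx0 hxN hxz
    have k2 := key y hy0 hyN hyz
    rw [hHz]
    calc a * Hmax κ x + b * Hmax κ y
        < a * (Real.log (Sfin N q) - x * Real.log q)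
          + b * (Real.log (Sfin N q) - y * Real.log q) :=
        add_lt_add (mul_lt_mul_of_pos_left k1 ha) (mul_lt_mul_of_pos_left k2 hb)
      _ = Real.log (Sfin N q) - z * Real.log q := by
          rw [hz]; linear_combination (Real.log (Sfin N q)) * hab
end

section
/- Let κ be a positive integer, let R ∈ ℤ_{≥0}^m and C ∈ ℤ_{≥0}^n with |R| = |C|, and suppose Π_κ(R,C) contains a matrix all of whose entries lie strictly between 0 and κ. Let G(x,y) := ∏_{i=1}^m ∏_{j=1}^n [1 + x_i y_j + ⋯ + (x_i y_j)^κ]. Then ln ( inf_{x_1,…,x_m,y_1,…,y_n > 0} G(x,y)/(x^R y^C) ) = max_{Z ∈ Π_κ(R,C)} Σ_{i=1}^m Σ_{j=1}^n H^max_κ(z_{ij}), where x^R y^C := ∏_i x_i^{r_i} ∏_j y_j^{c_j}. -/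
open Real Filter Finset

namespace BD


variable (κ : ℕ)

noncomputable def g (q : ℝ) : ℝ := ∑ t ∈ Finset.range (κ + 1), q ^ t
noncomputable def gn (q : ℝ) : ℝ := ∑ t ∈ Finset.range (κ + 1), (t : ℝ) * q ^ t
noncomputable def mu (q : ℝ) : ℝ := gn κ q / g κ q

lemma g_pos {q : ℝ} (hq : 0 ≤ q) : 0 < g κ q := by
  apply Finset.sum_pos' (fun t _ => pow_nonneg hq t)
  exact ⟨0, Finset.mem_range.2 (Nat.succ_pos κ), by norm_num⟩

lemma one_le_g {q : ℝ} (hq : 0 ≤ q) : 1 ≤ g κ q := by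
  have := Finset.single_le_sum (f := fun t => q ^ t) (fun t _ => pow_nonneg hq t)
    (Finset.mem_range.2 (Nat.succ_pos κ))
  simpa [g] using this

lemma pow_le_g {q : ℝ} (hq : 0 ≤ q) : q ^ κ ≤ g κ q := by
  have := Finset.single_le_sum (f := fun t => q ^ t) (fun t _ => pow_nonneg hq t)
    (Finset.mem_range.2 (Nat.lt_succ_self κ))
  simpa [g] using this

lemma gn_nonneg {q : ℝ} (hq : 0 ≤ q) : 0 ≤ gn κ q :=
  Finset.sum_nonneg fun t _ => mul_nonneg (Nat.cast_nonneg t) (pow_nonneg hq t)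

lemma mu_nonneg {q : ℝ} (hq : 0 ≤ q) : 0 ≤ mu κ q :=
  div_nonneg (gn_nonneg κ hq) (g_pos κ hq).le

lemma gn_zero : gn κ 0 = 0 := by
  apply Finset.sum_eq_zero
  intro t ht
  rcases Nat.eq_zero_or_pos t with h | h
  · simp [h]
  · simp [zero_pow h.ne']

lemma mu_zero : mu κ 0 = 0 := by simp [mu, gn_zero]

lemma mu_lt (hκ : 0 < κ) {q : ℝ} (hq : 0 ≤ q) : mu κ q < κ := by
  have h : gn κ q < (κ : ℝ) * g κ q := by
    rw [g, Finset.mul_sum, gn]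
    apply Finset.sum_lt_sum
    · intro t ht
      exact mul_le_mul_of_nonneg_right
        (by exact_mod_cast Nat.le_of_lt_succ (Finset.mem_range.1 ht)) (pow_nonneg hq t)
    · exact ⟨0, Finset.mem_range.2 (Nat.succ_pos κ), by
        simp; exact_mod_cast hκ⟩
  rw [mu, div_lt_iff₀ (g_pos κ hq)]
  exact h

lemma mu_pos (hκ : 0 < κ) {q : ℝ} (hq : 0 < q) : 0 < mu κ q := by
  apply div_pos _ (g_pos κ hq.le)
  apply Finset.sum_pos'
  · intro t _; exact mul_nonneg (Nat.cast_nonneg t) (pow_nonneg hq.le t)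
  · exact ⟨1, Finset.mem_range.2 (by omega), by simpa using hq⟩

lemma cross_le {a b : ℝ} (ha : 0 ≤ a) (hab : a ≤ b) {s t : ℕ} (hst : s ≤ t) :
    a ^ t * b ^ s ≤ b ^ t * a ^ s := by
  have hb : 0 ≤ b := ha.trans hab
  have h1 : a ^ t = a ^ s * a ^ (t - s) := by rw [← pow_add]; congr 1; omega
  have h2 : b ^ t = b ^ s * b ^ (t - s) := by rw [← pow_add]; congr 1; omega
  rw [h1, h2]
  calc a ^ s * a ^ (t - s) * b ^ s ≤ a ^ s * b ^ (t - s) * b ^ s := by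
        apply mul_le_mul_of_nonneg_right _ (pow_nonneg hb s)
        exact mul_le_mul_of_nonneg_left (pow_le_pow_left₀ ha hab _) (pow_nonneg ha s)
    _ = b ^ s * b ^ (t - s) * a ^ s := by ring

lemma term_nonneg {a b : ℝ} (ha : 0 ≤ a) (hab : a ≤ b) (t s : ℕ) :
    0 ≤ ((t : ℝ) - s) * (b ^ t * a ^ s - a ^ t * b ^ s) := by
  rcases le_total s t with h | h
  · apply mul_nonneg
    · have : (s : ℝ) ≤ t := by exact_mod_cast h
      linarith
    · linarith [cross_le ha hab h]
  · have h1 : (t : ℝ) - s ≤ 0 := by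
      have : (t : ℝ) ≤ s := by exact_mod_cast h
      linarith
    have h2 : b ^ t * a ^ s - a ^ t * b ^ s ≤ 0 := by
      have := cross_le ha hab h (s := t) (t := s)
      linarith
    nlinarith [mul_nonneg (neg_nonneg.2 h1) (neg_nonneg.2 h2)]

lemma key_lt (hκ : 0 < κ) {a b : ℝ} (ha : 0 ≤ a) (hab : a < b) :
    gn κ a * g κ b < gn κ b * g κ a := by
  set r := Finset.range (κ + 1) with hr
  have expand : ∀ (c d : ℝ) (f h : ℕ → ℝ),
      (∑ t ∈ r, f t) * (∑ s ∈ r, h s) = ∑ t ∈ r, ∑ s ∈ r, f t * h s := by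
    intro c d f h; rw [Finset.sum_mul_sum]
  have hP : ∑ t ∈ r, ∑ s ∈ r, ((t : ℝ) - s) * (b ^ t * a ^ s - a ^ t * b ^ s)
      = 2 * (gn κ b * g κ a - gn κ a * g κ b) := by
    have e1 : gn κ b * g κ a = ∑ t ∈ r, ∑ s ∈ r, ((t : ℝ) * b ^ t) * a ^ s :=
      expand 0 0 _ _
    have e2 : gn κ a * g κ b = ∑ t ∈ r, ∑ s ∈ r, ((t : ℝ) * a ^ t) * b ^ s :=
      expand 0 0 _ _
    have e3 : g κ b * gn κ a = ∑ t ∈ r, ∑ s ∈ r, b ^ t * ((s : ℝ) * a ^ s) :=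
      expand 0 0 _ _
    have e4 : g κ a * gn κ b = ∑ t ∈ r, ∑ s ∈ r, a ^ t * ((s : ℝ) * b ^ s) :=
      expand 0 0 _ _
    have : 2 * (gn κ b * g κ a - gn κ a * g κ b)
        = (gn κ b * g κ a - gn κ a * g κ b) + (g κ a * gn κ b - g κ b * gn κ a) := by ring
    rw [this, e1, e2, e3, e4, ← Finset.sum_sub_distrib, ← Finset.sum_sub_distrib,
      ← Finset.sum_add_distrib]
    apply Finset.sum_congr rfl; intro t _
    rw [← Finset.sum_sub_distrib, ← Finset.sum_sub_distrib, ← Finset.sum_add_distrib]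
    apply Finset.sum_congr rfl; intro s _
    ring
  have hpos : 0 < ∑ t ∈ r, ∑ s ∈ r, ((t : ℝ) - s) * (b ^ t * a ^ s - a ^ t * b ^ s) := by
    apply Finset.sum_pos'
    · intro t _
      exact Finset.sum_nonneg fun s _ => term_nonneg ha hab.le t s
    · refine ⟨1, Finset.mem_range.2 (by omega), Finset.sum_pos' (fun s _ => term_nonneg ha hab.le 1 s) ⟨0, Finset.mem_range.2 (Nat.succ_pos κ), ?_⟩⟩
      simp
      linarith
  rw [hP] at hpos
  linarith

lemma mu_strictMono (hκ : 0 < κ) {a b : ℝ} (ha : 0 ≤ a) (hab : a < b) :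
    mu κ a < mu κ b := by
  have hb : 0 ≤ b := ha.trans hab.le
  rw [mu, mu, div_lt_div_iff₀ (g_pos κ ha) (g_pos κ hb)]
  exact key_lt κ hκ ha hab

lemma g_continuous : Continuous (g κ) := by
  apply continuous_finset_sum
  intro t _
  exact continuous_pow t

lemma gn_continuous : Continuous (gn κ) := by
  apply continuous_finset_sum
  intro t _
  exact continuous_const.mul (continuous_pow t)

lemma mu_continuousOn {q : ℝ} (hq : 0 ≤ q) : ContinuousAt (mu κ) q := by
  exact ((gn_continuous κ).continuousAt).div ((g_continuous κ).continuousAt)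
    (g_pos κ hq).ne'

lemma mu_large (hκ : 0 < κ) {Q : ℝ} (hQ : 1 ≤ Q) : (κ : ℝ) * Q / (Q + κ) ≤ mu κ Q := by
  have hQ0 : 0 < Q := lt_of_lt_of_le one_pos hQ
  have hκR : (0 : ℝ) < κ := by exact_mod_cast hκ
  have hgn : (κ : ℝ) * Q ^ κ ≤ gn κ Q := by
    have := Finset.single_le_sum (f := fun t : ℕ => (t : ℝ) * Q ^ t)
      (fun t _ => mul_nonneg (Nat.cast_nonneg t) (pow_nonneg hQ0.le t))
      (Finset.mem_range.2 (Nat.lt_succ_self κ))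
    simpa [gn] using this
  have hg : g κ Q ≤ Q ^ κ + (κ : ℝ) * Q ^ (κ - 1) := by
    rw [g, Finset.sum_range_succ]
    have : ∑ t ∈ Finset.range κ, Q ^ t ≤ ∑ _t ∈ Finset.range κ, Q ^ (κ - 1) := by
      apply Finset.sum_le_sum
      intro t ht
      have ht' : t ≤ κ - 1 := by
        have := Finset.mem_range.1 ht
        omega
      exact pow_le_pow_right₀ hQ ht'
    simp only [Finset.sum_const, Finset.card_range, nsmul_eq_mul] at this
    linarith
  have hden : 0 < Q ^ κ + (κ : ℝ) * Q ^ (κ - 1) := by positivity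
  have step1 : (κ : ℝ) * Q ^ κ / (Q ^ κ + (κ : ℝ) * Q ^ (κ - 1)) ≤ mu κ Q := by
    rw [mu]
    calc (κ : ℝ) * Q ^ κ / (Q ^ κ + (κ : ℝ) * Q ^ (κ - 1))
        ≤ (κ : ℝ) * Q ^ κ / g κ Q := by
          exact div_le_div_of_nonneg_left (by positivity) (g_pos κ hQ0.le) hg
      _ ≤ gn κ Q / g κ Q := by
          gcongr
          exact (g_pos κ hQ0.le).le
  have heq : (κ : ℝ) * Q ^ κ / (Q ^ κ + (κ : ℝ) * Q ^ (κ - 1)) = (κ : ℝ) * Q / (Q + κ) := by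
    have hpow : Q ^ κ = Q ^ (κ - 1) * Q := by
      rw [← pow_succ]
      congr 1
      omega
    rw [hpow]
    have hne : Q ^ (κ - 1) ≠ 0 := by positivity
    field_simp
  rw [heq] at step1
  exact step1

lemma mu_surj (hκ : 0 < κ) {x : ℝ} (hx0 : 0 ≤ x) (hxκ : x < κ) :
    ∃ q, 0 ≤ q ∧ mu κ q = x := by
  have hκR : (0 : ℝ) < κ := by exact_mod_cast hκ
  set Q : ℝ := max 1 ((κ : ℝ) * x / ((κ : ℝ) - x) + 1) with hQdef
  have hQ1 : 1 ≤ Q := le_max_left _ _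
  have hQ0 : 0 < Q := lt_of_lt_of_le one_pos hQ1
  have hxQ : x ≤ mu κ Q := by
    have h1 : (κ : ℝ) * x / ((κ : ℝ) - x) < Q := by
      have := le_max_right 1 ((κ : ℝ) * x / ((κ : ℝ) - x) + 1)
      linarith
    have h2 : x < (κ : ℝ) * Q / (Q + κ) := by
      rw [div_lt_iff₀ (by linarith)] at h1
      rw [lt_div_iff₀ (by linarith)]
      nlinarith
    linarith [mu_large κ hκ hQ1]
  have hcont : ContinuousOn (mu κ) (Set.Icc 0 Q) :=
    fun q hq => (mu_continuousOn κ hq.1).continuousWithinAt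
  have := intermediate_value_Icc hQ0.le hcont
  have hmem : x ∈ Set.Icc (mu κ 0) (mu κ Q) := by
    rw [mu_zero]
    exact ⟨hx0, hxQ⟩
  obtain ⟨q, hq, hqx⟩ := this hmem
  exact ⟨q, hq.1, hqx⟩

lemma tgMean_coe (q : ℝ) : tgMean (κ : ℕ∞) q = mu κ q := by
  rw [tgMean, if_neg (by simp)]
  simp [mu, gn, g]

lemma tgQ_mu (hκ : 0 < κ) {q : ℝ} (hq : 0 ≤ q) : tgQ (κ : ℕ∞) (mu κ q) = q := by
  rw [tgQ]
  apply IsLeast.csInf_eq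
  constructor
  · exact ⟨hq, by rw [tgMean_coe]⟩
  · intro q' ⟨hq'0, hq'⟩
    by_contra h
    push_neg at h
    rw [tgMean_coe] at hq'
    exact absurd hq' (not_le.2 (mu_strictMono κ hκ hq'0 h))

lemma tgQ_kappa (hκ : 0 < κ) : tgQ (κ : ℕ∞) (κ : ℝ) = 0 := by
  rw [tgQ]
  convert Real.sInf_empty
  rw [Set.eq_empty_iff_forall_notMem]
  rintro q ⟨hq0, hq⟩
  rw [tgMean_coe] at hq
  exact absurd hq (not_le.2 (mu_lt κ hκ hq0))

lemma coe_lt_top : (κ : ℕ∞) ≠ ⊤ := by simp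

lemma toNat_coe : ((κ : ℕ∞)).toNat = κ := by simp

lemma tgP_eq {x : ℝ} : tgP (κ : ℕ∞) x = (g κ (tgQ (κ : ℕ∞) x))⁻¹ := by
  rw [tgP, if_neg (coe_lt_top κ), toNat_coe]
  rfl

lemma tgPMF_eq {x : ℝ} (t : ℕ) :
    tgPMF (κ : ℕ∞) x t = if t ≤ κ then (g κ (tgQ (κ : ℕ∞) x))⁻¹ * tgQ (κ : ℕ∞) x ^ t else 0 := by
  rw [tgPMF, tgP_eq]
  congr 1
  simp [Nat.cast_le]

/-- key computation: `∑_t a_t log b_t` where `a, b` are tg-weights. -/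
lemma sum_weight_log {q q' : ℝ} (hq : 0 < q) (hq' : 0 < q') :
    ∑ t ∈ Finset.range (κ + 1), ((g κ q)⁻¹ * q ^ t) * Real.log ((g κ q')⁻¹ * q' ^ t)
      = -(Real.log (g κ q') - mu κ q * Real.log q') := by
  have hgq : 0 < g κ q := g_pos κ hq.le
  have hgq' : 0 < g κ q' := g_pos κ hq'.le
  have hlog : ∀ t : ℕ, Real.log ((g κ q')⁻¹ * q' ^ t)
      = -Real.log (g κ q') + t * Real.log q' := by
    intro t
    rw [Real.log_mul (by positivity) (by positivity), Real.log_inv, Real.log_pow]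
  calc ∑ t ∈ Finset.range (κ + 1), ((g κ q)⁻¹ * q ^ t) * Real.log ((g κ q')⁻¹ * q' ^ t)
      = ∑ t ∈ Finset.range (κ + 1),
          ((-Real.log (g κ q')) * ((g κ q)⁻¹ * q ^ t)
            + (g κ q)⁻¹ * Real.log q' * ((t : ℝ) * q ^ t)) := by
        apply Finset.sum_congr rfl
        intro t _
        rw [hlog t]
        ring
    _ = (-Real.log (g κ q')) * ((g κ q)⁻¹ * g κ q)
          + (g κ q)⁻¹ * Real.log q' * gn κ q := by
        simp only [Finset.sum_add_distrib, ← Finset.mul_sum, g, gn]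
    _ = -(Real.log (g κ q') - mu κ q * Real.log q') := by
        rw [inv_mul_cancel₀ hgq.ne', mu]
        field_simp
        ring

lemma Hmax_tsum_eq {x : ℝ} :
    Hmax (κ : ℕ∞) x = -∑ t ∈ Finset.range (κ + 1),
      tgPMF (κ : ℕ∞) x t * Real.log (tgPMF (κ : ℕ∞) x t) := by
  rw [Hmax]
  congr 1
  apply tsum_eq_sum
  intro t ht
  have : ¬ t ≤ κ := by
    intro h
    exact ht (Finset.mem_range.2 (by omega))
  rw [tgPMF_eq, if_neg this]
  simp

lemma Hmax_mu (hκ : 0 < κ) {q : ℝ} (hq : 0 < q) :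
    Hmax (κ : ℕ∞) (mu κ q) = Real.log (g κ q) - mu κ q * Real.log q := by
  rw [Hmax_tsum_eq]
  have hQ : tgQ (κ : ℕ∞) (mu κ q) = q := tgQ_mu κ hκ hq.le
  have : ∀ t ∈ Finset.range (κ + 1),
      tgPMF (κ : ℕ∞) (mu κ q) t * Real.log (tgPMF (κ : ℕ∞) (mu κ q) t)
        = ((g κ q)⁻¹ * q ^ t) * Real.log ((g κ q)⁻¹ * q ^ t) := by
    intro t ht
    have ht' : t ≤ κ := by
      have := Finset.mem_range.1 ht
      omega
    rw [tgPMF_eq, hQ, if_pos ht']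
  rw [Finset.sum_congr rfl this, sum_weight_log κ hq hq, neg_neg]

lemma Hmax_of_tgQ_zero {x : ℝ} (h : tgQ (κ : ℕ∞) x = 0) : Hmax (κ : ℕ∞) x = 0 := by
  rw [Hmax_tsum_eq]
  rw [neg_eq_zero]
  apply Finset.sum_eq_zero
  intro t _
  rw [tgPMF_eq, h]
  rcases Nat.eq_zero_or_pos t with h0 | h0
  · subst h0
    simp [g]
  · by_cases ht : t ≤ κ <;> simp [ht, zero_pow h0.ne']

lemma Hmax_zero (hκ : 0 < κ) : Hmax (κ : ℕ∞) 0 = 0 := by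
  apply Hmax_of_tgQ_zero
  have := tgQ_mu κ hκ (le_refl (0:ℝ))
  rwa [mu_zero] at this

lemma Hmax_kappa (hκ : 0 < κ) : Hmax (κ : ℕ∞) (κ : ℝ) = 0 :=
  Hmax_of_tgQ_zero κ (tgQ_kappa κ hκ)

/-- Gibbs: for the optimal `q` with mean `x = mu q`, the Legendre value at `q` is minimal. -/
lemma gibbs_core {q q' : ℝ} (hq : 0 < q) (hq' : 0 < q') :
    Real.log (g κ q) - mu κ q * Real.log q ≤ Real.log (g κ q') - mu κ q * Real.log q' := by
  have hgq : 0 < g κ q := g_pos κ hq.le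
  have hgq' : 0 < g κ q' := g_pos κ hq'.le
  have ha : ∀ t : ℕ, 0 < (g κ q)⁻¹ * q ^ t := fun t => by positivity
  have hb : ∀ t : ℕ, 0 < (g κ q')⁻¹ * q' ^ t := fun t => by positivity
  have hsums : ∀ r : ℝ, 0 < r → ∑ t ∈ Finset.range (κ + 1), (g κ r)⁻¹ * r ^ t = 1 := by
    intro r hr
    rw [← Finset.mul_sum, ← g, inv_mul_cancel₀ (g_pos κ hr.le).ne']
  have key : ∑ t ∈ Finset.range (κ + 1),
        ((g κ q)⁻¹ * q ^ t) * Real.log ((g κ q)⁻¹ * q ^ t)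
      ≥ ∑ t ∈ Finset.range (κ + 1),
        ((g κ q)⁻¹ * q ^ t) * Real.log ((g κ q')⁻¹ * q' ^ t) := by
    rw [ge_iff_le, ← sub_nonpos, ← Finset.sum_sub_distrib]
    have hterm : ∀ t ∈ Finset.range (κ + 1),
        ((g κ q)⁻¹ * q ^ t) * Real.log ((g κ q')⁻¹ * q' ^ t)
          - ((g κ q)⁻¹ * q ^ t) * Real.log ((g κ q)⁻¹ * q ^ t)
        ≤ (g κ q')⁻¹ * q' ^ t - (g κ q)⁻¹ * q ^ t := by
      intro t _
      set a := (g κ q)⁻¹ * q ^ t with hadef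
      set b := (g κ q')⁻¹ * q' ^ t with hbdef
      have h1 : Real.log (b / a) ≤ b / a - 1 :=
        Real.log_le_sub_one_of_pos (div_pos (hb t) (ha t))
      rw [Real.log_div (hb t).ne' (ha t).ne'] at h1
      have h2 : a * (Real.log b - Real.log a) ≤ a * (b / a - 1) :=
        mul_le_mul_of_nonneg_left h1 (ha t).le
      have h3 : a * (b / a - 1) = b - a := by
        have hane : a ≠ 0 := (ha t).ne'
        rw [mul_sub, mul_one, mul_div_assoc', mul_comm a b, mul_div_assoc, div_self hane, mul_one]
      nlinarith [h2, h3]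
    calc ∑ t ∈ Finset.range (κ + 1), (((g κ q)⁻¹ * q ^ t) * Real.log ((g κ q')⁻¹ * q' ^ t)
          - ((g κ q)⁻¹ * q ^ t) * Real.log ((g κ q)⁻¹ * q ^ t))
        ≤ ∑ t ∈ Finset.range (κ + 1), ((g κ q')⁻¹ * q' ^ t - (g κ q)⁻¹ * q ^ t) :=
          Finset.sum_le_sum hterm
      _ = 0 := by
          rw [Finset.sum_sub_distrib, hsums q' hq', hsums q hq, sub_self]
  have e1 := sum_weight_log κ hq hq
  have e2 := sum_weight_log κ hq hq'
  rw [e1, e2] at key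
  linarith

lemma gibbs (hκ : 0 < κ) {x q' : ℝ} (hx0 : 0 ≤ x) (hxκ : x ≤ κ) (hq' : 0 < q') :
    Hmax (κ : ℕ∞) x ≤ Real.log (g κ q') - x * Real.log q' := by
  rcases eq_or_lt_of_le hx0 with h0 | h0
  · rw [← h0, Hmax_zero κ hκ]
    simp only [zero_mul, sub_zero]
    exact Real.log_nonneg (one_le_g κ hq'.le)
  rcases eq_or_lt_of_le hxκ with hk | hk
  · rw [hk, Hmax_kappa κ hκ]
    have h1 : (q') ^ κ ≤ g κ q' := pow_le_g κ hq'.le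
    have h2 : Real.log (q' ^ κ) ≤ Real.log (g κ q') :=
      Real.log_le_log (by positivity) h1
    rw [Real.log_pow] at h2
    linarith
  · obtain ⟨q, hq0, hqx⟩ := mu_surj κ hκ hx0 hk
    have hqpos : 0 < q := by
      rcases eq_or_lt_of_le hq0 with h | h
      · exfalso
        rw [← h, mu_zero] at hqx
        linarith
      · exact h
    rw [← hqx, Hmax_mu κ hκ hqpos]
    exact gibbs_core κ hqpos hq'

end BD

namespace BD

variable {m n : ℕ} (κ : ℕ) (R : Fin m → ℕ) (C : Fin n → ℕ)

/-- The convex objective in log-variables. -/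
noncomputable def F (p : (Fin m → ℝ) × (Fin n → ℝ)) : ℝ :=
  ∑ i, ∑ j, Real.log (g κ (Real.exp (p.1 i + p.2 j)))
    - ∑ i, (R i : ℝ) * p.1 i - ∑ j, (C j : ℝ) * p.2 j

lemma lin_sum {Z : Fin m → Fin n → ℝ} (hr : ∀ i, ∑ j, Z i j = (R i : ℝ))
    (hc : ∀ j, ∑ i, Z i j = (C j : ℝ)) (s : Fin m → ℝ) (t : Fin n → ℝ) :
    ∑ i, ∑ j, Z i j * (s i + t j) = ∑ i, (R i : ℝ) * s i + ∑ j, (C j : ℝ) * t j := by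
  have h1 : ∑ i, ∑ j, Z i j * (s i + t j)
      = ∑ i, ∑ j, Z i j * s i + ∑ i, ∑ j, Z i j * t j := by
    rw [← Finset.sum_add_distrib]
    apply Finset.sum_congr rfl
    intro i _
    rw [← Finset.sum_add_distrib]
    apply Finset.sum_congr rfl
    intro j _
    ring
  rw [h1]
  congr 1
  · apply Finset.sum_congr rfl
    intro i _
    rw [← Finset.sum_mul, hr i, mul_comm]
  · rw [Finset.sum_comm]
    apply Finset.sum_congr rfl
    intro j _
    rw [← Finset.sum_mul, hc j, mul_comm]

lemma F_eq_sum {Z : Fin m → Fin n → ℝ} (hr : ∀ i, ∑ j, Z i j = (R i : ℝ))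
    (hc : ∀ j, ∑ i, Z i j = (C j : ℝ)) (p : (Fin m → ℝ) × (Fin n → ℝ)) :
    F κ R C p = ∑ i, ∑ j,
      (Real.log (g κ (Real.exp (p.1 i + p.2 j))) - Z i j * (p.1 i + p.2 j)) := by
  have h : ∑ i, ∑ j, (Real.log (g κ (Real.exp (p.1 i + p.2 j))) - Z i j * (p.1 i + p.2 j))
      = ∑ i, ∑ j, Real.log (g κ (Real.exp (p.1 i + p.2 j))) - ∑ i, ∑ j, Z i j * (p.1 i + p.2 j) := by
    rw [← Finset.sum_sub_distrib]
    apply Finset.sum_congr rfl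
    intro i _
    rw [← Finset.sum_sub_distrib]
  rw [h, lin_sum R C hr hc, F]
  ring

/-- lower bound for the Legendre integrand. -/
lemma legendre_lb (hκ : 0 < κ) {z : ℝ} (hz0 : 0 < z) (hzκ : z < κ) (u : ℝ) :
    min z ((κ : ℝ) - z) * |u| ≤ Real.log (g κ (Real.exp u)) - z * u := by
  have h0 : (0:ℝ) ≤ Real.log (g κ (Real.exp u)) := Real.log_nonneg (one_le_g κ (Real.exp_pos u).le)
  have hκu : (κ : ℝ) * u ≤ Real.log (g κ (Real.exp u)) := by
    have h1 : Real.exp u ^ κ ≤ g κ (Real.exp u) := pow_le_g κ (Real.exp_pos u).le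
    have h2 : Real.log (Real.exp u ^ κ) ≤ Real.log (g κ (Real.exp u)) :=
      Real.log_le_log (by positivity) h1
    rwa [Real.log_pow, Real.log_exp] at h2
  rcases le_total 0 u with hu | hu
  · rw [abs_of_nonneg hu]
    have : min z ((κ : ℝ) - z) * u ≤ ((κ : ℝ) - z) * u :=
      mul_le_mul_of_nonneg_right (min_le_right _ _) hu
    nlinarith
  · rw [abs_of_nonpos hu]
    have : min z ((κ : ℝ) - z) * (-u) ≤ z * (-u) :=
      mul_le_mul_of_nonneg_right (min_le_left _ _) (by linarith)
    nlinarith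

/-- weak duality -/
lemma weak_duality (hκ : 0 < κ) {Z : Fin m → Fin n → ℝ}
    (hZ : Z ∈ transportPolytope (κ : ℕ∞) R C) (p : (Fin m → ℝ) × (Fin n → ℝ)) :
    ∑ i, ∑ j, Hmax (κ : ℕ∞) (Z i j) ≤ F κ R C p := by
  obtain ⟨hZ0, hZκ, hr, hc⟩ := hZ
  rw [F_eq_sum κ R C hr hc]
  apply Finset.sum_le_sum
  intro i _
  apply Finset.sum_le_sum
  intro j _
  have hb : Z i j ≤ (κ : ℝ) := by
    have := hZκ i j (coe_lt_top κ)
    rwa [toNat_coe] at this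
  have := gibbs κ hκ (hZ0 i j) hb (Real.exp_pos (p.1 i + p.2 j))
  rwa [Real.log_exp] at this

lemma F_continuous : Continuous (F κ R C) := by
  apply Continuous.sub
  apply Continuous.sub
  · apply continuous_finset_sum
    intro i _
    apply continuous_finset_sum
    intro j _
    apply Continuous.log
    · exact (g_continuous κ).comp (Real.continuous_exp.comp
        ((continuous_apply i).comp continuous_fst |>.add
          ((continuous_apply j).comp continuous_snd)))
    · intro p
      exact (g_pos κ (Real.exp_pos _).le).ne'
  · apply continuous_finset_sum
    intro i _
    exact continuous_const.mul ((continuous_apply i).comp continuous_fst)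
  · apply continuous_finset_sum
    intro j _
    exact continuous_const.mul ((continuous_apply j).comp continuous_snd)

lemma F_shift (hN : ∑ i, R i = ∑ j, C j) (p : (Fin m → ℝ) × (Fin n → ℝ)) (c : ℝ) :
    F κ R C (fun i => p.1 i - c, fun j => p.2 j + c) = F κ R C p := by
  have hlog : ∀ i j, (p.1 i - c) + (p.2 j + c) = p.1 i + p.2 j := by
    intro i j; ring
  simp only [F]
  have h1 : ∀ i j, Real.log (g κ (Real.exp ((p.1 i - c) + (p.2 j + c))))
      = Real.log (g κ (Real.exp (p.1 i + p.2 j))) := by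
    intro i j; rw [hlog]
  have hsum : (∑ i, ∑ j, Real.log (g κ (Real.exp ((p.1 i - c) + (p.2 j + c)))))
      = ∑ i, ∑ j, Real.log (g κ (Real.exp (p.1 i + p.2 j))) := by
    apply Finset.sum_congr rfl; intro i _
    apply Finset.sum_congr rfl; intro j _
    exact h1 i j
  rw [hsum]
  have h2 : ∑ i, (R i : ℝ) * (p.1 i - c) = ∑ i, (R i : ℝ) * p.1 i - (∑ i, (R i : ℝ)) * c := by
    rw [Finset.sum_mul, ← Finset.sum_sub_distrib]
    apply Finset.sum_congr rfl; intro i _; ring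
  have h3 : ∑ j, (C j : ℝ) * (p.2 j + c) = ∑ j, (C j : ℝ) * p.2 j + (∑ j, (C j : ℝ)) * c := by
    rw [Finset.sum_mul, ← Finset.sum_add_distrib]
    apply Finset.sum_congr rfl; intro j _; ring
  have h4 : (∑ i, (R i : ℝ)) = ∑ j, (C j : ℝ) := by
    have := hN
    push_cast [← Nat.cast_sum] at *
    exact_mod_cast this
  rw [h2, h3, h4]
  ring

lemma exists_min (hκ : 0 < κ) (hm : 0 < m) (hn : 0 < n)
    (hN : ∑ i, R i = ∑ j, C j)
    {Z0 : Fin m → Fin n → ℝ} (hZ0 : Z0 ∈ transportPolytope (κ : ℕ∞) R C)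
    (hint : ∀ i j, 0 < Z0 i j ∧ Z0 i j < (κ : ℝ)) :
    ∃ p1, ∀ p, F κ R C p1 ≤ F κ R C p := by
  obtain ⟨hZnn, hZκ, hr, hc⟩ := hZ0
  set i0 : Fin m := ⟨0, hm⟩
  set j0 : Fin n := ⟨0, hn⟩
  -- uniform gap δ
  obtain ⟨δ, hδpos, hδ⟩ : ∃ δ : ℝ, 0 < δ ∧ ∀ i j, δ ≤ min (Z0 i j) ((κ : ℝ) - Z0 i j) := by
    obtain ⟨⟨i', j'⟩, _, hmin⟩ := Finset.exists_min_image (Finset.univ : Finset (Fin m × Fin n))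
      (fun ij => min (Z0 ij.1 ij.2) ((κ : ℝ) - Z0 ij.1 ij.2)) ⟨(i0, j0), Finset.mem_univ _⟩
    refine ⟨min (Z0 i' j') ((κ : ℝ) - Z0 i' j'), lt_min (hint i' j').1 (by linarith [(hint i' j').2]), ?_⟩
    intro i j
    exact hmin (i, j) (Finset.mem_univ _)
  -- every term of the Legendre form of F is nonneg, and ≥ δ|u|
  have hterm : ∀ (p : (Fin m → ℝ) × (Fin n → ℝ)) i j,
      δ * |p.1 i + p.2 j| ≤ Real.log (g κ (Real.exp (p.1 i + p.2 j))) - Z0 i j * (p.1 i + p.2 j) := by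
    intro p i j
    calc δ * |p.1 i + p.2 j| ≤ min (Z0 i j) ((κ : ℝ) - Z0 i j) * |p.1 i + p.2 j| :=
          mul_le_mul_of_nonneg_right (hδ i j) (abs_nonneg _)
      _ ≤ _ := legendre_lb κ hκ (hint i j).1 (hint i j).2 _
  have htermnn : ∀ (p : (Fin m → ℝ) × (Fin n → ℝ)) i j,
      0 ≤ Real.log (g κ (Real.exp (p.1 i + p.2 j))) - Z0 i j * (p.1 i + p.2 j) := by
    intro p i j
    have := hterm p i j
    nlinarith [abs_nonneg (p.1 i + p.2 j), hδpos.le]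
  set B : ℝ := F κ R C (0, 0) with hB
  have hB0 : 0 ≤ B := by
    rw [hB, F_eq_sum κ R C hr hc]
    exact Finset.sum_nonneg fun i _ => Finset.sum_nonneg fun j _ => htermnn _ i j
  set M : ℝ := B / δ with hM
  have hM0 : 0 ≤ M := div_nonneg hB0 hδpos.le
  -- bound on individual terms when F p ≤ B
  have hbound : ∀ (p : (Fin m → ℝ) × (Fin n → ℝ)), F κ R C p ≤ B → ∀ i j, |p.1 i + p.2 j| ≤ M := by
    intro p hp i j
    have hFeq := F_eq_sum κ R C hr hc p
    have h1 : Real.log (g κ (Real.exp (p.1 i + p.2 j))) - Z0 i j * (p.1 i + p.2 j) ≤ B := by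
      calc Real.log (g κ (Real.exp (p.1 i + p.2 j))) - Z0 i j * (p.1 i + p.2 j)
          ≤ ∑ j', (Real.log (g κ (Real.exp (p.1 i + p.2 j'))) - Z0 i j' * (p.1 i + p.2 j')) :=
            Finset.single_le_sum (fun j' _ => htermnn p i j') (Finset.mem_univ j)
        _ ≤ ∑ i', ∑ j', (Real.log (g κ (Real.exp (p.1 i' + p.2 j'))) - Z0 i' j' * (p.1 i' + p.2 j')) :=
            Finset.single_le_sum (f := fun i' => ∑ j', (Real.log (g κ (Real.exp (p.1 i' + p.2 j'))) - Z0 i' j' * (p.1 i' + p.2 j')))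
              (fun i' _ => Finset.sum_nonneg fun j' _ => htermnn p i' j') (Finset.mem_univ i)
        _ = F κ R C p := hFeq.symm
        _ ≤ B := hp
    have := hterm p i j
    rw [hM, le_div_iff₀ hδpos]
    nlinarith
  set a : ℝ := 2 * M with ha_def
  set A : Set ((Fin m → ℝ) × (Fin n → ℝ)) := {p | p.1 i0 = 0} with hA
  set Kset : Set ((Fin m → ℝ) × (Fin n → ℝ)) :=
    ((Set.univ.pi fun _ : Fin m => Set.Icc (-a) a) ×ˢ (Set.univ.pi fun _ : Fin n => Set.Icc (-a) a)) ∩ A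
    with hK
  have hKcompact : IsCompact Kset := by
    apply IsCompact.inter_right
    · exact ((isCompact_univ_pi fun _ => isCompact_Icc).prod
        (isCompact_univ_pi fun _ => isCompact_Icc))
    · exact isClosed_eq ((continuous_apply i0).comp continuous_fst) continuous_const
  have ha0 : 0 ≤ a := by rw [ha_def]; linarith
  have hzero : (0, 0) ∈ Kset := by
    refine ⟨⟨fun i _ => Set.mem_Icc.2 ⟨?_, ?_⟩, fun j _ => Set.mem_Icc.2 ⟨?_, ?_⟩⟩, rfl⟩ <;>
      simp only [Pi.zero_apply] <;> linarith
  obtain ⟨p1, hp1K, hp1min⟩ := hKcompact.exists_isMinOn ⟨(0,0), hzero⟩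
    ((F_continuous κ R C).continuousOn)
  refine ⟨p1, ?_⟩
  intro p
  -- shift p into the slice A
  set c : ℝ := p.1 i0
  set p' : (Fin m → ℝ) × (Fin n → ℝ) := (fun i => p.1 i - c, fun j => p.2 j + c) with hp'
  have hFp' : F κ R C p' = F κ R C p := F_shift κ R C hN p c
  have hp'A : p' ∈ A := by
    simp [hp', hA, sub_self, c]
  rw [← hFp']
  by_cases hle : F κ R C p' ≤ B
  · -- p' lies in the compact set
    have hbd := hbound p' hle
    have hp'2 : ∀ j, |p'.2 j| ≤ M := by
      intro j
      have := hbd i0 j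
      have h0 : p'.1 i0 = 0 := hp'A
      rwa [h0, zero_add] at this
    have hp'1 : ∀ i, |p'.1 i| ≤ a := by
      intro i
      have h1 := hbd i j0
      have h2 := hp'2 j0
      calc |p'.1 i| = |(p'.1 i + p'.2 j0) - p'.2 j0| := by ring_nf
        _ ≤ |p'.1 i + p'.2 j0| + |p'.2 j0| := abs_sub _ _
        _ ≤ M + M := add_le_add h1 h2
        _ = a := by ring
    have hp'K : p' ∈ Kset := by
      refine ⟨⟨?_, ?_⟩, hp'A⟩
      · intro i _
        exact Set.mem_Icc.2 (abs_le.1 (hp'1 i))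
      · intro j _
        refine Set.mem_Icc.2 (abs_le.1 ?_)
        calc |p'.2 j| ≤ M := hp'2 j
          _ ≤ a := by simp only [a]; linarith
    exact hp1min hp'K
  · push_neg at hle
    calc F κ R C p1 ≤ F κ R C (0, 0) := hp1min hzero
      _ = B := rfl
      _ ≤ F κ R C p' := hle.le

lemma g_exp_eq (v : ℝ) : g κ (Real.exp v) = ∑ t ∈ Finset.range (κ + 1), Real.exp (t * v) := by
  rw [g]
  apply Finset.sum_congr rfl
  intro t _
  rw [← Real.exp_nat_mul]

lemma hasDerivAt_L (v : ℝ) :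
    HasDerivAt (fun v => Real.log (g κ (Real.exp v))) (mu κ (Real.exp v)) v := by
  have h1 : HasDerivAt (fun v => g κ (Real.exp v)) (gn κ (Real.exp v)) v := by
    have h2 : ∀ t ∈ Finset.range (κ + 1),
        HasDerivAt (fun v => Real.exp ((t : ℝ) * v)) ((t : ℝ) * Real.exp ((t : ℝ) * v)) v := by
      intro t _
      have := ((hasDerivAt_id v).const_mul (t : ℝ)).exp
      simpa [mul_comm] using this
    have h3 := HasDerivAt.fun_sum h2
    have e1 : (fun v => g κ (Real.exp v)) = fun v => ∑ t ∈ Finset.range (κ + 1), Real.exp (t * v) := by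
      funext v
      exact g_exp_eq κ v
    rw [e1]
    refine h3.congr_deriv ?_
    rw [gn]
    apply Finset.sum_congr rfl
    intro t _
    rw [← Real.exp_nat_mul]
  have := h1.log (g_pos κ (Real.exp_pos v).le).ne'
  rwa [mu]

lemma hasDerivAt_L_shift (w h0 : ℝ) :
    HasDerivAt (fun h => Real.log (g κ (Real.exp (w + h)))) (mu κ (Real.exp (w + h0))) h0 := by
  have := (hasDerivAt_L κ (w + h0)).comp h0 ((hasDerivAt_id h0).const_add w)
  simpa [Function.comp_def] using this

lemma stationary_col (p1 : (Fin m → ℝ) × (Fin n → ℝ))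
    (hmin : ∀ p, F κ R C p1 ≤ F κ R C p) (j : Fin n) :
    ∑ i, mu κ (Real.exp (p1.1 i + p1.2 j)) = (C j : ℝ) := by
  set s := p1.1
  set t := p1.2
  set G : ℝ → ℝ := fun h => F κ R C (s, Function.update t j (t j + h)) with hGdef
  have hG : ∀ h, G h = (∑ i, Real.log (g κ (Real.exp (s i + (t j + h))))) - (C j : ℝ) * h
      + ((∑ i, ∑ j' ∈ Finset.univ.erase j, Real.log (g κ (Real.exp (s i + t j'))))
        - ∑ i, (R i : ℝ) * s i - ∑ j' ∈ Finset.univ.erase j, (C j' : ℝ) * t j'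
        - (C j : ℝ) * t j) := by
    intro h
    rw [hGdef]
    simp only [F]
    have h1 : ∀ i, ∑ j', Real.log (g κ (Real.exp (s i + Function.update t j (t j + h) j')))
        = Real.log (g κ (Real.exp (s i + (t j + h))))
          + ∑ j' ∈ Finset.univ.erase j, Real.log (g κ (Real.exp (s i + t j'))) := by
      intro i
      rw [← Finset.add_sum_erase _ _ (Finset.mem_univ j), Function.update_self]
      congr 1
      apply Finset.sum_congr rfl
      intro j' hj'
      rw [Function.update_of_ne (Finset.mem_erase.1 hj').1]
    have h2 : ∑ j', (C j' : ℝ) * Function.update t j (t j + h) j'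
        = (C j : ℝ) * (t j + h) + ∑ j' ∈ Finset.univ.erase j, (C j' : ℝ) * t j' := by
      rw [← Finset.add_sum_erase _ _ (Finset.mem_univ j), Function.update_self]
      congr 1
      apply Finset.sum_congr rfl
      intro j' hj'
      rw [Function.update_of_ne (Finset.mem_erase.1 hj').1]
    rw [h2]
    rw [Finset.sum_congr rfl fun i _ => h1 i, Finset.sum_add_distrib]
    ring
  have hd : HasDerivAt G ((∑ i, mu κ (Real.exp (s i + t j))) - (C j : ℝ)) 0 := by
    have e : G = fun h => (∑ i, Real.log (g κ (Real.exp (s i + (t j + h))))) - (C j : ℝ) * h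
        + ((∑ i, ∑ j' ∈ Finset.univ.erase j, Real.log (g κ (Real.exp (s i + t j'))))
          - ∑ i, (R i : ℝ) * s i - ∑ j' ∈ Finset.univ.erase j, (C j' : ℝ) * t j'
          - (C j : ℝ) * t j) := funext hG
    rw [e]
    have hsum : HasDerivAt (fun h : ℝ => ∑ i, Real.log (g κ (Real.exp (s i + (t j + h)))))
        (∑ i, mu κ (Real.exp (s i + t j))) 0 := by
      have := HasDerivAt.fun_sum (u := (Finset.univ : Finset (Fin m)))
        (A := fun i (h : ℝ) => Real.log (g κ (Real.exp (s i + (t j + h)))))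
        (A' := fun i => mu κ (Real.exp (s i + t j)))
        (fun i _ => by
          show HasDerivAt (fun h : ℝ => Real.log (g κ (Real.exp (s i + (t j + h)))))
            (mu κ (Real.exp (s i + t j))) 0
          simp only [← add_assoc]
          simpa using hasDerivAt_L_shift κ (s i + t j) 0)
      exact this
    have hlinear : HasDerivAt (fun h : ℝ => (C j : ℝ) * h) ((C j : ℝ)) 0 := by
      simpa using (hasDerivAt_id (0:ℝ)).const_mul ((C j : ℝ))
    exact ((hsum.sub hlinear).add_const _)
  have hG0 : G 0 = F κ R C p1 := by
    rw [hGdef]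
    simp only [add_zero, Function.update_eq_self]
    rfl
  have hloc : IsLocalMin G 0 := by
    apply Filter.Eventually.of_forall
    intro h
    rw [hG0]
    exact hmin _
  have := hloc.hasDerivAt_eq_zero hd
  linarith [this]

lemma stationary_row (p1 : (Fin m → ℝ) × (Fin n → ℝ))
    (hmin : ∀ p, F κ R C p1 ≤ F κ R C p) (i : Fin m) :
    ∑ j, mu κ (Real.exp (p1.1 i + p1.2 j)) = (R i : ℝ) := by
  set s := p1.1
  set t := p1.2
  set G : ℝ → ℝ := fun h => F κ R C (Function.update s i (s i + h), t) with hGdef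
  have hG : ∀ h, G h = (∑ j, Real.log (g κ (Real.exp ((s i + h) + t j)))) - (R i : ℝ) * h
      + ((∑ i' ∈ Finset.univ.erase i, ∑ j, Real.log (g κ (Real.exp (s i' + t j))))
        - ∑ i' ∈ Finset.univ.erase i, (R i' : ℝ) * s i' - ∑ j, (C j : ℝ) * t j
        - (R i : ℝ) * s i) := by
    intro h
    rw [hGdef]
    simp only [F]
    have h1 : ∑ i', ∑ j, Real.log (g κ (Real.exp (Function.update s i (s i + h) i' + t j)))
        = (∑ j, Real.log (g κ (Real.exp ((s i + h) + t j))))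
          + ∑ i' ∈ Finset.univ.erase i, ∑ j, Real.log (g κ (Real.exp (s i' + t j))) := by
      rw [← Finset.add_sum_erase _ _ (Finset.mem_univ i), Function.update_self]
      congr 1
      apply Finset.sum_congr rfl
      intro i' hi'
      apply Finset.sum_congr rfl
      intro j _
      rw [Function.update_of_ne (Finset.mem_erase.1 hi').1]
    have h2 : ∑ i', (R i' : ℝ) * Function.update s i (s i + h) i'
        = (R i : ℝ) * (s i + h) + ∑ i' ∈ Finset.univ.erase i, (R i' : ℝ) * s i' := by
      rw [← Finset.add_sum_erase _ _ (Finset.mem_univ i), Function.update_self]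
      congr 1
      apply Finset.sum_congr rfl
      intro i' hi'
      rw [Function.update_of_ne (Finset.mem_erase.1 hi').1]
    rw [h1, h2]
    ring
  have hd : HasDerivAt G ((∑ j, mu κ (Real.exp (s i + t j))) - (R i : ℝ)) 0 := by
    have e : G = fun h => (∑ j, Real.log (g κ (Real.exp ((s i + h) + t j)))) - (R i : ℝ) * h
        + ((∑ i' ∈ Finset.univ.erase i, ∑ j, Real.log (g κ (Real.exp (s i' + t j))))
          - ∑ i' ∈ Finset.univ.erase i, (R i' : ℝ) * s i' - ∑ j, (C j : ℝ) * t j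
          - (R i : ℝ) * s i) := funext hG
    rw [e]
    have hsum : HasDerivAt (fun h : ℝ => ∑ j, Real.log (g κ (Real.exp ((s i + h) + t j))))
        (∑ j, mu κ (Real.exp (s i + t j))) 0 := by
      have := HasDerivAt.fun_sum (u := (Finset.univ : Finset (Fin n)))
        (A := fun j (h : ℝ) => Real.log (g κ (Real.exp ((s i + h) + t j))))
        (A' := fun j => mu κ (Real.exp (s i + t j)))
        (fun j _ => by
          show HasDerivAt (fun h : ℝ => Real.log (g κ (Real.exp ((s i + h) + t j))))
            (mu κ (Real.exp (s i + t j))) 0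
          have e2 : (fun h : ℝ => Real.log (g κ (Real.exp ((s i + h) + t j))))
              = fun h : ℝ => Real.log (g κ (Real.exp ((s i + t j) + h))) := by
            funext h
            congr 2
            ring
          rw [e2]
          simpa using hasDerivAt_L_shift κ (s i + t j) 0)
      exact this
    have hlinear : HasDerivAt (fun h : ℝ => (R i : ℝ) * h) ((R i : ℝ)) 0 := by
      simpa using (hasDerivAt_id (0:ℝ)).const_mul ((R i : ℝ))
    exact ((hsum.sub hlinear).add_const _)
  have hG0 : G 0 = F κ R C p1 := by
    rw [hGdef]
    simp only [add_zero, Function.update_eq_self]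
    rfl
  have hloc : IsLocalMin G 0 := by
    apply Filter.Eventually.of_forall
    intro h
    rw [hG0]
    exact hmin _
  have := hloc.hasDerivAt_eq_zero hd
  linarith [this]

lemma exp_F (p : (Fin m → ℝ) × (Fin n → ℝ)) :
    Real.exp (F κ R C p)
      = genFun (fun _ _ => κ) (fun i => Real.exp (p.1 i)) (fun j => Real.exp (p.2 j))
        / (monom (fun i => Real.exp (p.1 i)) R * monom (fun j => Real.exp (p.2 j)) C) := by
  have hgen : genFun (fun _ _ => κ) (fun i => Real.exp (p.1 i)) (fun j => Real.exp (p.2 j))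
      = ∏ i, ∏ j, g κ (Real.exp (p.1 i + p.2 j)) := by
    rw [genFun]
    apply Finset.prod_congr rfl
    intro i _
    apply Finset.prod_congr rfl
    intro j _
    rw [Real.exp_add]
    rfl
  have h1 : Real.exp (∑ i, ∑ j, Real.log (g κ (Real.exp (p.1 i + p.2 j))))
      = ∏ i, ∏ j, g κ (Real.exp (p.1 i + p.2 j)) := by
    rw [Real.exp_sum]
    apply Finset.prod_congr rfl
    intro i _
    rw [Real.exp_sum]
    apply Finset.prod_congr rfl
    intro j _
    exact Real.exp_log (g_pos κ (Real.exp_pos _).le)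
  have h2 : monom (fun i => Real.exp (p.1 i)) R = Real.exp (∑ i, (R i : ℝ) * p.1 i) := by
    rw [monom, Real.exp_sum]
    apply Finset.prod_congr rfl
    intro i _
    rw [← Real.exp_nat_mul]
  have h3 : monom (fun j => Real.exp (p.2 j)) C = Real.exp (∑ j, (C j : ℝ) * p.2 j) := by
    rw [monom, Real.exp_sum]
    apply Finset.prod_congr rfl
    intro j _
    rw [← Real.exp_nat_mul]
  rw [hgen, h2, h3, F, Real.exp_sub, Real.exp_sub, h1, div_div]

end BD

/-- **Lemma (duality).** For constant bound `κ`, the log of the infimum of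
`G(x,y)/(x^R y^C)` equals the maximum of `∑_{ij} H^max_κ(z_{ij})` over `Π_κ(R,C)`. -/
theorem genfun_entropy_duality {m n : ℕ} (κ : ℕ) (hκ : 0 < κ)
    (R : Fin m → ℕ) (C : Fin n → ℕ) (hN : ∑ i, R i = ∑ j, C j)
    (hint : ∃ Z ∈ transportPolytope (κ : ℕ∞) R C,
      ∀ i j, 0 < Z i j ∧ Z i j < (κ : ℝ)) :
    Real.log (sInf {v : ℝ | ∃ (x : Fin m → ℝ) (y : Fin n → ℝ),
      (∀ i, 0 < x i) ∧ (∀ j, 0 < y j) ∧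
      v = genFun (fun _ _ => κ) x y / (monom x R * monom y C)}) =
    sSup {v : ℝ | ∃ Z ∈ transportPolytope (κ : ℕ∞) R C,
      v = ∑ i, ∑ j, Hmax (κ : ℕ∞) (Z i j)} := by

  rcases Nat.eq_zero_or_pos m with hm | hm
  · -- degenerate: no rows
    subst hm
    have hC : ∀ j, C j = 0 := by
      intro j
      have h0 : ∑ j, C j = 0 := by
        rw [← hN]
        simp
      exact (Finset.sum_eq_zero_iff.1 h0) j (Finset.mem_univ j)
    have hS : {v : ℝ | ∃ (x : Fin 0 → ℝ) (y : Fin n → ℝ),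
        (∀ i, 0 < x i) ∧ (∀ j, 0 < y j) ∧
        v = genFun (fun _ _ => κ) x y / (monom x R * monom y C)} = {1} := by
      ext v
      simp only [Set.mem_setOf_eq, Set.mem_singleton_iff]
      constructor
      · rintro ⟨x, y, hx, hy, rfl⟩
        simp [genFun, monom, hC]
      · rintro rfl
        exact ⟨Fin.elim0, fun _ => 1, fun i => i.elim0, fun _ => one_pos,
          by simp [genFun, monom, hC]⟩
    have hT : {v : ℝ | ∃ Z ∈ transportPolytope (κ : ℕ∞) R C,
        v = ∑ i, ∑ j, Hmax (κ : ℕ∞) (Z i j)} = {0} := by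
      ext v
      simp only [Set.mem_setOf_eq, Set.mem_singleton_iff]
      constructor
      · rintro ⟨Z, _, rfl⟩
        simp
      · rintro rfl
        refine ⟨Fin.elim0, ⟨fun i => i.elim0, fun i => i.elim0, fun i => i.elim0, fun j => by simp [hC]⟩, by simp⟩
    rw [hS, hT, csInf_singleton, csSup_singleton, Real.log_one]
  rcases Nat.eq_zero_or_pos n with hn | hn
  · -- degenerate: no columns
    subst hn
    have hR : ∀ i, R i = 0 := by
      intro i
      have h0 : ∑ i, R i = 0 := by
        rw [hN]
        simp
      exact (Finset.sum_eq_zero_iff.1 h0) i (Finset.mem_univ i)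
    have hS : {v : ℝ | ∃ (x : Fin m → ℝ) (y : Fin 0 → ℝ),
        (∀ i, 0 < x i) ∧ (∀ j, 0 < y j) ∧
        v = genFun (fun _ _ => κ) x y / (monom x R * monom y C)} = {1} := by
      ext v
      simp only [Set.mem_setOf_eq, Set.mem_singleton_iff]
      constructor
      · rintro ⟨x, y, hx, hy, rfl⟩
        simp [genFun, monom, hR]
      · rintro rfl
        exact ⟨fun _ => 1, Fin.elim0, fun _ => one_pos, fun j => j.elim0,
          by simp [genFun, monom, hR]⟩
    have hT : {v : ℝ | ∃ Z ∈ transportPolytope (κ : ℕ∞) R C,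
        v = ∑ i, ∑ j, Hmax (κ : ℕ∞) (Z i j)} = {0} := by
      ext v
      simp only [Set.mem_setOf_eq, Set.mem_singleton_iff]
      constructor
      · rintro ⟨Z, _, rfl⟩
        simp
      · rintro rfl
        refine ⟨fun _ => Fin.elim0, ⟨fun i j => j.elim0, fun i j => j.elim0,
          fun i => by simp [hR], fun j => j.elim0⟩, by simp⟩
    rw [hS, hT, csInf_singleton, csSup_singleton, Real.log_one]
  -- main case
  obtain ⟨Z0, hZ0mem, hZ0int⟩ := hint
  obtain ⟨p1, hp1⟩ := BD.exists_min κ R C hκ hm hn hN hZ0mem hZ0int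
  set S := {v : ℝ | ∃ (x : Fin m → ℝ) (y : Fin n → ℝ),
      (∀ i, 0 < x i) ∧ (∀ j, 0 < y j) ∧
      v = genFun (fun _ _ => κ) x y / (monom x R * monom y C)} with hSdef
  set T := {v : ℝ | ∃ Z ∈ transportPolytope (κ : ℕ∞) R C,
      v = ∑ i, ∑ j, Hmax (κ : ℕ∞) (Z i j)} with hTdef
  have hS1 : ∀ v ∈ S, Real.exp (BD.F κ R C p1) ≤ v := by
    rintro v ⟨x, y, hx, hy, rfl⟩
    set p : (Fin m → ℝ) × (Fin n → ℝ) := (fun i => Real.log (x i), fun j => Real.log (y j))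
    have hx' : (fun i => Real.exp (p.1 i)) = x := funext fun i => Real.exp_log (hx i)
    have hy' : (fun j => Real.exp (p.2 j)) = y := funext fun j => Real.exp_log (hy j)
    have := BD.exp_F κ R C p
    rw [hx', hy'] at this
    rw [← this]
    exact Real.exp_le_exp.2 (hp1 p)
  have hS2 : Real.exp (BD.F κ R C p1) ∈ S :=
    ⟨fun i => Real.exp (p1.1 i), fun j => Real.exp (p1.2 j),
      fun i => Real.exp_pos _, fun j => Real.exp_pos _, BD.exp_F κ R C p1⟩
  have hInf : sInf S = Real.exp (BD.F κ R C p1) :=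
    le_antisymm (csInf_le ⟨_, hS1⟩ hS2) (le_csInf ⟨_, hS2⟩ hS1)
  -- optimal matrix
  set Zs : Fin m → Fin n → ℝ := fun i j => BD.mu κ (Real.exp (p1.1 i + p1.2 j)) with hZsdef
  have hZsmem : Zs ∈ transportPolytope (κ : ℕ∞) R C := by
    refine ⟨fun i j => BD.mu_nonneg κ (Real.exp_pos _).le,
      fun i j _ => ?_, BD.stationary_row κ R C p1 hp1, BD.stationary_col κ R C p1 hp1⟩
    rw [BD.toNat_coe]
    exact (BD.mu_lt κ hκ (Real.exp_pos _).le).le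
  have hFp1 : BD.F κ R C p1 = ∑ i, ∑ j, Hmax (κ : ℕ∞) (Zs i j) := by
    rw [BD.F_eq_sum κ R C (BD.stationary_row κ R C p1 hp1) (BD.stationary_col κ R C p1 hp1) p1]
    apply Finset.sum_congr rfl
    intro i _
    apply Finset.sum_congr rfl
    intro j _
    rw [hZsdef]
    rw [BD.Hmax_mu κ hκ (Real.exp_pos _), Real.log_exp]
  have hT1 : BD.F κ R C p1 ∈ T := ⟨Zs, hZsmem, hFp1⟩
  have hT2 : ∀ w ∈ T, w ≤ BD.F κ R C p1 := by
    rintro w ⟨Z, hZ, rfl⟩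
    exact BD.weak_duality κ R C hκ hZ p1
  have hSup : sSup T = BD.F κ R C p1 :=
    le_antisymm (csSup_le ⟨_, hT1⟩ hT2) (le_csSup ⟨_, hT2⟩ hT1)
  rw [hInf, hSup, Real.log_exp]
end

section
/- Let κ be a positive integer and let x ∈ [0,κ). Then there exist unique parameters p ∈ (0,1] and q ∈ [0,∞) such that p(1 + q + q² + ⋯ + q^κ) = 1 and p(q + 2q² + ⋯ + κq^κ) = x; equivalently, there is a unique truncated geometric probability distribution on {0,1,…,κ} (one of the form Pr[X=t] = p q^t for t = 0,…,κ) with mean x. -/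
open Real Filter Finset

namespace TruncGeomAux

/-- Denominator: `1 + q + ⋯ + q^κ`. -/
def Dfun (κ : ℕ) (q : ℝ) : ℝ := ∑ t ∈ Finset.range (κ + 1), q ^ t

/-- Numerator: `q + 2q² + ⋯ + κq^κ`. -/
def Nfun (κ : ℕ) (q : ℝ) : ℝ := ∑ t ∈ Finset.range (κ + 1), (t : ℝ) * q ^ t

lemma gnn (κ : ℕ) {a b : ℝ} (ha : 0 ≤ a) (hab : a < b) {t s : ℕ} (hst : s ≤ t) :
    0 ≤ ((t : ℝ) - s) * (a ^ s * b ^ t - a ^ t * b ^ s) := by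
  obtain ⟨d, rfl⟩ := Nat.exists_eq_add_of_le hst
  have hb : 0 ≤ b := ha.trans hab.le
  have h1 : a ^ s * b ^ (s + d) - a ^ (s + d) * b ^ s
      = a ^ s * b ^ s * (b ^ d - a ^ d) := by rw [pow_add, pow_add]; ring
  have h2 : a ^ d ≤ b ^ d := pow_le_pow_left₀ ha hab.le d
  have h3 : ((s + d : ℕ) : ℝ) - s = d := by push_cast; ring
  rw [h1, h3]
  exact mul_nonneg (Nat.cast_nonneg d)
    (mul_nonneg (mul_nonneg (pow_nonneg ha s) (pow_nonneg hb s)) (sub_nonneg.2 h2))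

lemma gnn' (κ : ℕ) {a b : ℝ} (ha : 0 ≤ a) (hab : a < b) (t s : ℕ) :
    0 ≤ ((t : ℝ) - s) * (a ^ s * b ^ t - a ^ t * b ^ s) := by
  rcases le_total s t with h | h
  · exact gnn κ ha hab h
  · have e : ((t : ℝ) - s) * (a ^ s * b ^ t - a ^ t * b ^ s)
        = ((s : ℝ) - t) * (a ^ t * b ^ s - a ^ s * b ^ t) := by ring
    rw [e]
    exact gnn κ ha hab h

lemma key (κ : ℕ) (hκ : 0 < κ) {a b : ℝ} (ha : 0 ≤ a) (hab : a < b) :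
    Nfun κ a * Dfun κ b < Nfun κ b * Dfun κ a := by
  have hb : 0 < b := lt_of_le_of_lt ha hab
  have e1 : Nfun κ b * Dfun κ a
      = ∑ t ∈ Finset.range (κ + 1), ∑ s ∈ Finset.range (κ + 1),
          (t : ℝ) * a ^ s * b ^ t := by
    unfold Nfun Dfun
    rw [Finset.sum_mul_sum]
    exact Finset.sum_congr rfl fun t _ => Finset.sum_congr rfl fun s _ => by ring
  have e2 : Nfun κ a * Dfun κ b
      = ∑ t ∈ Finset.range (κ + 1), ∑ s ∈ Finset.range (κ + 1),
          (s : ℝ) * a ^ s * b ^ t := by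
    unfold Nfun Dfun
    rw [Finset.sum_mul_sum, Finset.sum_comm]
  have expand : Nfun κ b * Dfun κ a - Nfun κ a * Dfun κ b
      = ∑ t ∈ Finset.range (κ + 1), ∑ s ∈ Finset.range (κ + 1),
          ((t : ℝ) - s) * a ^ s * b ^ t := by
    rw [e1, e2, ← Finset.sum_sub_distrib]
    refine Finset.sum_congr rfl fun t _ => ?_
    rw [← Finset.sum_sub_distrib]
    exact Finset.sum_congr rfl fun s _ => by ring
  set S : ℝ := ∑ t ∈ Finset.range (κ + 1), ∑ s ∈ Finset.range (κ + 1),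
      ((t : ℝ) - s) * a ^ s * b ^ t with hSdef
  have hswap : S = ∑ t ∈ Finset.range (κ + 1), ∑ s ∈ Finset.range (κ + 1),
      ((s : ℝ) - t) * a ^ t * b ^ s := by
    rw [hSdef]; exact Finset.sum_comm
  have hS2 : 2 * S = ∑ t ∈ Finset.range (κ + 1), ∑ s ∈ Finset.range (κ + 1),
      ((t : ℝ) - s) * (a ^ s * b ^ t - a ^ t * b ^ s) := by
    calc 2 * S = S + S := two_mul S
    _ = ∑ t ∈ Finset.range (κ + 1), ∑ s ∈ Finset.range (κ + 1),
        (((t : ℝ) - s) * a ^ s * b ^ t + ((s : ℝ) - t) * a ^ t * b ^ s) := by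
      nth_rewrite 2 [hswap]
      rw [hSdef, ← Finset.sum_add_distrib]
      exact Finset.sum_congr rfl fun t _ => (Finset.sum_add_distrib).symm
    _ = _ := Finset.sum_congr rfl fun t _ => Finset.sum_congr rfl fun s _ => by ring
  have hpos : 0 < 2 * S := by
    rw [hS2]
    apply Finset.sum_pos'
    · intro t _
      exact Finset.sum_nonneg fun s _ => gnn' κ ha hab t s
    · refine ⟨κ, Finset.self_mem_range_succ κ, ?_⟩
      apply Finset.sum_pos'
      · intro s _
        exact gnn' κ ha hab κ s
      · refine ⟨0, Finset.mem_range.2 (Nat.succ_pos κ), ?_⟩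
        have hκb : a ^ κ < b ^ κ := pow_lt_pow_left₀ hab ha hκ.ne'
        simp only [Nat.cast_zero, sub_zero, pow_zero, one_mul, mul_one]
        have hκr : (0 : ℝ) < (κ : ℝ) := by exact_mod_cast hκ
        exact mul_pos hκr (sub_pos.2 hκb)
  linarith [expand ▸ (by linarith : 0 < S)]

lemma D_ge_one (κ : ℕ) {q : ℝ} (hq : 0 ≤ q) : 1 ≤ Dfun κ q := by
  have h := Finset.single_le_sum (f := fun t => q ^ t)
    (fun i _ => pow_nonneg hq i) (Finset.mem_range.2 (Nat.succ_pos κ))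
  simpa [Dfun] using h

lemma N_zero (κ : ℕ) : Nfun κ 0 = 0 := by
  apply Finset.sum_eq_zero
  intro t _
  cases t with
  | zero => simp
  | succ n => simp

lemma D_zero (κ : ℕ) : Dfun κ 0 = 1 := by
  unfold Dfun
  rw [Finset.sum_range_succ']
  simp

end TruncGeomAux

/-- **Lemma.** For `x ∈ [0,κ)` there is a unique truncated geometric distribution on
`{0,…,κ}` with mean `x`: unique parameters `p ∈ (0,1]`, `q ∈ [0,∞)` with
`p(1+q+⋯+q^κ) = 1` and `p(q+2q²+⋯+κq^κ) = x`. -/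
theorem truncGeom_exists_unique (κ : ℕ) (hκ : 0 < κ) (x : ℝ) (hx0 : 0 ≤ x)
    (hxκ : x < (κ : ℝ)) :
    ∃! pq : ℝ × ℝ, (0 < pq.1 ∧ pq.1 ≤ 1) ∧ 0 ≤ pq.2 ∧
      pq.1 * (∑ t ∈ Finset.range (κ + 1), pq.2 ^ t) = 1 ∧
      pq.1 * (∑ t ∈ Finset.range (κ + 1), (t : ℝ) * pq.2 ^ t) = x := by
  classical
  open TruncGeomAux in
  have hb : (0 : ℝ) < (κ : ℝ) - x := sub_pos.2 hxκ
  have hκr : (0 : ℝ) < (κ : ℝ) := by exact_mod_cast hκ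
  obtain ⟨M, hM1, hMgt⟩ : ∃ M : ℝ, 1 ≤ M ∧ (κ : ℝ) ^ 2 + κ < ((κ : ℝ) - x) * M := by
    refine ⟨((κ : ℝ) ^ 2 + κ) / ((κ : ℝ) - x) + 1, ?_, ?_⟩
    · have : 0 ≤ ((κ : ℝ) ^ 2 + κ) / ((κ : ℝ) - x) := div_nonneg (by positivity) hb.le
      linarith
    · rw [mul_add, mul_one, mul_div_cancel₀ _ hb.ne']
      linarith
  have hMpos : 0 < M := lt_of_lt_of_le one_pos hM1
  have hDMge : M ^ κ ≤ Dfun κ M :=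
    Finset.single_le_sum (f := fun t => M ^ t)
      (fun i _ => pow_nonneg hMpos.le i) (Finset.self_mem_range_succ κ)
  have hbound : (κ : ℝ) * Dfun κ M - Nfun κ M ≤ ((κ : ℝ) + 1) * ((κ : ℝ) * M ^ (κ - 1)) := by
    have hrw : (κ : ℝ) * Dfun κ M - Nfun κ M
        = ∑ t ∈ Finset.range (κ + 1), ((κ : ℝ) - t) * M ^ t := by
      unfold Nfun Dfun
      rw [Finset.mul_sum, ← Finset.sum_sub_distrib]
      exact Finset.sum_congr rfl fun t _ => by ring
    rw [hrw]
    calc ∑ t ∈ Finset.range (κ + 1), ((κ : ℝ) - t) * M ^ t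
        ≤ ∑ _t ∈ Finset.range (κ + 1), (κ : ℝ) * M ^ (κ - 1) := by
          apply Finset.sum_le_sum
          intro t ht
          rcases eq_or_ne t κ with h | h
          · subst h; simp; positivity
          · have htκ : t ≤ κ - 1 := by
              have : t < κ + 1 := Finset.mem_range.1 ht
              omega
            have h1 : ((κ : ℝ) - t) ≤ κ := by
              have : (0 : ℝ) ≤ (t : ℝ) := Nat.cast_nonneg t
              linarith
            have h2 : M ^ t ≤ M ^ (κ - 1) := pow_le_pow_right₀ hM1 htκ
            have h0 : (0 : ℝ) ≤ (κ : ℝ) - t := by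
              have : (t : ℝ) ≤ κ := by exact_mod_cast (by omega : t ≤ κ)
              linarith
            exact mul_le_mul h1 h2 (pow_nonneg hMpos.le t) hκr.le
    _ = ((κ : ℝ) + 1) * ((κ : ℝ) * M ^ (κ - 1)) := by
        rw [Finset.sum_const, Finset.card_range]
        push_cast
        ring
  have hMκ : M ^ κ = M ^ (κ - 1) * M := by
    rw [← pow_succ]
    congr 1
    omega
  have hhM : 0 < Nfun κ M - x * Dfun κ M := by
    have h4 : ((κ : ℝ) - x) * M ^ κ ≤ ((κ : ℝ) - x) * Dfun κ M :=
      mul_le_mul_of_nonneg_left hDMge hb.le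
    have h5 : 0 < M ^ (κ - 1) := pow_pos hMpos _
    have h6 : M ^ (κ - 1) * ((κ : ℝ) ^ 2 + κ) < M ^ (κ - 1) * (((κ : ℝ) - x) * M) :=
      mul_lt_mul_of_pos_left hMgt h5
    have h7 : ((κ : ℝ) - x) * M ^ κ = M ^ (κ - 1) * (((κ : ℝ) - x) * M) := by
      rw [hMκ]; ring
    have h8 : ((κ : ℝ) + 1) * ((κ : ℝ) * M ^ (κ - 1))
        = M ^ (κ - 1) * ((κ : ℝ) ^ 2 + (κ : ℝ)) := by ring
    linarith
  have hcont : ContinuousOn (fun q => Nfun κ q - x * Dfun κ q) (Set.Icc 0 M) := by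
    apply Continuous.continuousOn
    unfold Nfun Dfun
    exact (continuous_finset_sum _ fun i _ => continuous_const.mul (continuous_pow i)).sub
      (continuous_const.mul (continuous_finset_sum _ fun i _ => continuous_pow i))
  have h0M : (0 : ℝ) ≤ M := hMpos.le
  have hmem : (0 : ℝ) ∈ Set.Icc (Nfun κ 0 - x * Dfun κ 0) (Nfun κ M - x * Dfun κ M) := by
    rw [N_zero, D_zero]
    constructor
    · linarith
    · linarith
  obtain ⟨q, hqmem, hq0⟩ := intermediate_value_Icc h0M hcont hmem
  have hq : 0 ≤ q := hqmem.1
  have hNq : Nfun κ q = x * Dfun κ q := by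
    have := hq0
    simp only at this
    linarith
  have hDq1 : 1 ≤ Dfun κ q := D_ge_one κ hq
  have hDqpos : 0 < Dfun κ q := lt_of_lt_of_le one_pos hDq1
  refine ⟨((Dfun κ q)⁻¹, q), ⟨⟨inv_pos.2 hDqpos, ?_⟩, hq, ?_, ?_⟩, ?_⟩
  · exact inv_le_one_of_one_le₀ hDq1
  · exact inv_mul_cancel₀ hDqpos.ne'
  · show (Dfun κ q)⁻¹ * Nfun κ q = x
    rw [hNq, mul_comm x, ← mul_assoc, inv_mul_cancel₀ hDqpos.ne', one_mul]
  · rintro ⟨p', q'⟩ ⟨⟨hp'0, hp'1⟩, hq'0, hD', hN'⟩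
    have hD'' : p' * Dfun κ q' = 1 := hD'
    have hN'' : p' * Nfun κ q' = x := hN'
    have hNq' : Nfun κ q' = x * Dfun κ q' := by
      have h1 : p' * Nfun κ q' = p' * (x * Dfun κ q') := by
        rw [hN'']
        rw [show x * Dfun κ q' = x * Dfun κ q' from rfl]
        calc x = x * 1 := (mul_one x).symm
        _ = x * (p' * Dfun κ q') := by rw [hD'']
        _ = p' * (x * Dfun κ q') := by ring
      exact mul_left_cancel₀ hp'0.ne' h1
    have hqq : q' = q := by
      by_contra hne
      rcases lt_or_gt_of_ne hne with h | h
      · have hk := key κ hκ hq'0 h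
        rw [hNq, hNq'] at hk
        nlinarith [hk]
      · have hk := key κ hκ hq h
        rw [hNq, hNq'] at hk
        nlinarith [hk]
    have hpp : p' = (Dfun κ q)⁻¹ := by
      rw [hqq] at hD''
      field_simp at hD'' ⊢
      linarith [hD'']
    exact Prod.ext hpp hqq
end

section
/- Let κ be a positive integer and let R ∈ ℤ_{≥0}^m, C ∈ ℤ_{≥0}^n with |R| = |C|. Suppose Π_κ(R,C) contains a matrix all of whose entries lie strictly between 0 and κ. Then the function Z ↦ Σ_{i=1}^m Σ_{j=1}^n H^max_κ(z_{ij}) attains its maximum over Π_κ(R,C) at a unique matrix Z, and this maximizer satisfies 0 < z_{ij} < κ for all i,j. -/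
open Real Filter Finset

noncomputable section EntropyAux


variable (κ : ℕ)

def Sk (q : ℝ) : ℝ := ∑ t ∈ Finset.range (κ + 1), q ^ t
def Nk (q : ℝ) : ℝ := ∑ t ∈ Finset.range (κ + 1), (t : ℝ) * q ^ t
def gk (q : ℝ) : ℝ := Nk κ q / Sk κ q
def phiK (q x : ℝ) : ℝ := Real.log (Sk κ q) - x * Real.log q

variable {κ}

lemma Sk_one_le {q : ℝ} (hq : 0 ≤ q) : 1 ≤ Sk κ q := by
  have : Sk κ q = 1 + ∑ t ∈ Finset.Ico 1 (κ+1), q ^ t := by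
    rw [Sk, Finset.range_eq_Ico, ← Finset.sum_Ico_consecutive _ (by omega : 0 ≤ 1) (by omega : 1 ≤ κ+1)]
    simp
  rw [this]
  have : 0 ≤ ∑ t ∈ Finset.Ico 1 (κ+1), q ^ t :=
    Finset.sum_nonneg fun t _ => pow_nonneg hq t
  linarith

lemma Sk_pos {q : ℝ} (hq : 0 ≤ q) : 0 < Sk κ q := lt_of_lt_of_le one_pos (Sk_one_le hq)

lemma Nk_nonneg {q : ℝ} (hq : 0 ≤ q) : 0 ≤ Nk κ q :=
  Finset.sum_nonneg fun t _ => mul_nonneg (Nat.cast_nonneg t) (pow_nonneg hq t)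

lemma gk_nonneg {q : ℝ} (hq : 0 ≤ q) : 0 ≤ gk κ q :=
  div_nonneg (Nk_nonneg hq) (Sk_pos hq).le

lemma Sk_cont : Continuous (Sk κ) := by
  unfold Sk; exact continuous_finset_sum _ fun t _ => continuous_pow t

lemma Nk_cont : Continuous (Nk κ) := by
  unfold Nk; exact continuous_finset_sum _ fun t _ => (continuous_const.mul (continuous_pow t))

lemma gk_contAt {q : ℝ} (hq : 0 ≤ q) : ContinuousAt (gk κ) q := by
  have : ContinuousAt (fun q => Nk κ q / Sk κ q) q :=
    (Nk_cont.continuousAt).div (Sk_cont.continuousAt) (ne_of_gt (Sk_pos hq))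
  exact this

lemma Nk_zero : Nk κ (0:ℝ) = 0 := by
  unfold Nk
  apply Finset.sum_eq_zero
  intro t ht
  rcases Nat.eq_zero_or_pos t with h | h
  · simp [h]
  · simp [zero_pow (by omega : t ≠ 0)]

lemma gk_zero : gk κ (0:ℝ) = 0 := by simp [gk, Nk_zero]

lemma Nk_lt (hκ : 0 < κ) {q : ℝ} (hq : 0 ≤ q) : Nk κ q ≤ κ * (Sk κ q - 1) := by
  have h1 : Sk κ q - 1 = ∑ t ∈ Finset.Ico 1 (κ+1), q ^ t := by
    rw [Sk, Finset.range_eq_Ico, ← Finset.sum_Ico_consecutive _ (by omega : 0 ≤ 1) (by omega : 1 ≤ κ+1)]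
    simp
  have h2 : Nk κ q = ∑ t ∈ Finset.Ico 1 (κ+1), (t:ℝ) * q ^ t := by
    rw [Nk, Finset.range_eq_Ico, ← Finset.sum_Ico_consecutive _ (by omega : 0 ≤ 1) (by omega : 1 ≤ κ+1)]
    simp
  rw [h1, h2, Finset.mul_sum]
  apply Finset.sum_le_sum
  intro t ht
  simp only [Finset.mem_Ico] at ht
  have : (t:ℝ) ≤ κ := by exact_mod_cast (by omega : t ≤ κ)
  exact mul_le_mul_of_nonneg_right this (pow_nonneg hq t)

lemma gk_lt_kappa (hκ : 0 < κ) {q : ℝ} (hq : 0 ≤ q) : gk κ q < κ := by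
  rw [gk, div_lt_iff₀ (Sk_pos hq)]
  have h := Nk_lt hκ hq
  have hκ' : (0:ℝ) < κ := by exact_mod_cast hκ
  nlinarith [Sk_pos (κ := κ) hq]

-- g(q) ≥ q/(κ+1) for q ∈ [0,1]
lemma gk_lb_small (hκ : 0 < κ) {q : ℝ} (hq : 0 ≤ q) (hq1 : q ≤ 1) :
    q / (κ + 1) ≤ gk κ q := by
  have hN : q ≤ Nk κ q := by
    have h2 : Nk κ q = ∑ t ∈ Finset.Ico 1 (κ+1), (t:ℝ) * q ^ t := by
      rw [Nk, Finset.range_eq_Ico, ← Finset.sum_Ico_consecutive _ (by omega : 0 ≤ 1) (by omega : 1 ≤ κ+1)]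
      simp
    have h3 := Finset.single_le_sum (f := fun t : ℕ => (t:ℝ) * q ^ t)
        (fun t _ => mul_nonneg (Nat.cast_nonneg t) (pow_nonneg hq t))
        (by simp only [Finset.mem_Ico]; omega : 1 ∈ Finset.Ico 1 (κ+1))
    rw [h2]; push_cast at h3 ⊢; nlinarith
  have hS : Sk κ q ≤ κ + 1 := by
    rw [Sk]
    calc ∑ t ∈ Finset.range (κ+1), q ^ t ≤ ∑ t ∈ Finset.range (κ+1), 1 := by
          apply Finset.sum_le_sum; intro t _; exact pow_le_one₀ hq hq1
      _ = κ + 1 := by simp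
  rw [gk, div_le_div_iff₀ (by positivity) (Sk_pos hq)]
  have := Nk_nonneg (κ := κ) hq
  nlinarith [Sk_pos (κ := κ) hq]

-- g(q) ≥ κ - κ²/q for q ≥ 1
lemma gk_lb_big (hκ : 0 < κ) {q : ℝ} (hq : 1 ≤ q) : (κ:ℝ) - κ^2 / q ≤ gk κ q := by
  have hq0 : (0:ℝ) < q := lt_of_lt_of_le one_pos hq
  have key : (κ:ℝ) * Sk κ q - Nk κ q ≤ κ^2 * q^(κ-1) := by
    have h0 : (κ:ℝ) * Sk κ q - Nk κ q = ∑ t ∈ Finset.range (κ+1), ((κ:ℝ) - t) * q ^ t := by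
      rw [Sk, Nk, Finset.mul_sum, ← Finset.sum_sub_distrib]
      congr 1; ext t; ring
    have h1 : ∑ t ∈ Finset.range (κ+1), ((κ:ℝ) - t) * q ^ t
        = ∑ t ∈ Finset.range κ, ((κ:ℝ) - t) * q ^ t := by
      rw [Finset.sum_range_succ]; simp
    rw [h0, h1]
    calc ∑ t ∈ Finset.range κ, ((κ:ℝ) - t) * q ^ t
        ≤ ∑ t ∈ Finset.range κ, (κ:ℝ) * q ^ (κ-1) := by
          apply Finset.sum_le_sum
          intro t ht
          simp only [Finset.mem_range] at ht
          have h1' : (κ:ℝ) - t ≤ κ := by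
            have : (0:ℝ) ≤ t := Nat.cast_nonneg t
            linarith
          have h2 : q ^ t ≤ q ^ (κ-1) := pow_le_pow_right₀ hq (by omega)
          calc ((κ:ℝ) - t) * q ^ t ≤ (κ:ℝ) * q ^ t :=
                mul_le_mul_of_nonneg_right h1' (pow_nonneg hq0.le t)
            _ ≤ (κ:ℝ) * q ^ (κ-1) :=
                mul_le_mul_of_nonneg_left h2 (Nat.cast_nonneg κ)
      _ = (κ:ℝ)^2 * q^(κ-1) := by rw [Finset.sum_const]; simp [Finset.card_range]; ring
  have hSq : q ^ κ ≤ Sk κ q := by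
    apply Finset.single_le_sum (f := fun t => q ^ t)
      (fun t _ => pow_nonneg hq0.le t)
      (by simp : κ ∈ Finset.range (κ+1))
  have hpow : q ^ κ = q ^ (κ-1) * q := by
    rw [← pow_succ]; congr 1; omega
  rw [gk, le_div_iff₀ (Sk_pos hq0.le)]
  have hS0 := Sk_pos (κ := κ) hq0.le
  have hk0 : (0:ℝ) < (κ:ℝ) := by exact_mod_cast hκ
  have e1 : ((κ:ℝ) - κ^2/q) * Sk κ q = κ * Sk κ q - (κ^2/q) * Sk κ q := by ring
  rw [e1]
  have e2 : (κ:ℝ)^2 * q^(κ-1) ≤ (κ^2/q) * Sk κ q := by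
    rw [div_mul_eq_mul_div, le_div_iff₀ hq0]
    calc (κ:ℝ)^2 * q^(κ-1) * q = κ^2 * q^κ := by rw [hpow]; ring
      _ ≤ κ^2 * Sk κ q := by nlinarith
  linarith


lemma tgMean_coe (κ : ℕ) (q : ℝ) : tgMean (κ:ℕ∞) q = gk κ q := by
  rw [tgMean, if_neg (by exact_mod_cast WithTop.coe_ne_top)]
  simp [gk, Nk, Sk]

lemma tgQ_spec (hκ : 0 < κ) {x : ℝ} (hx0 : 0 < x) (hxκ : x < κ) :
    0 < tgQ (κ:ℕ∞) x ∧ gk κ (tgQ (κ:ℕ∞) x) = x ∧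
      ∀ q : ℝ, 0 ≤ q → x ≤ gk κ q → tgQ (κ:ℕ∞) x ≤ q := by
  have hAeq : {q : ℝ | 0 ≤ q ∧ x ≤ tgMean (κ:ℕ∞) q} = {q : ℝ | 0 ≤ q ∧ x ≤ gk κ q} := by
    ext q; rw [Set.mem_setOf_eq, Set.mem_setOf_eq, tgMean_coe]
  set A : Set ℝ := {q : ℝ | 0 ≤ q ∧ x ≤ gk κ q} with hA
  have hq_def : tgQ (κ:ℕ∞) x = sInf A := by rw [tgQ, hAeq]
  have hbdd : BddBelow A := ⟨0, fun q hq => hq.1⟩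
  have hxκ' : (0:ℝ) < (κ:ℝ) - x := by linarith
  have hne : A.Nonempty := by
    refine ⟨max 1 ((κ:ℝ)^2 / ((κ:ℝ) - x)), ?_, ?_⟩
    · positivity
    · have h1 : (1:ℝ) ≤ max 1 ((κ:ℝ)^2 / ((κ:ℝ) - x)) := le_max_left _ _
      have h0 : (0:ℝ) < max 1 ((κ:ℝ)^2 / ((κ:ℝ) - x)) := by positivity
      have h2 := gk_lb_big hκ h1
      have h3 : (κ:ℝ)^2 / max 1 ((κ:ℝ)^2 / ((κ:ℝ) - x)) ≤ (κ:ℝ) - x := by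
        rw [div_le_iff₀ h0]
        have h4 : (κ:ℝ)^2 / ((κ:ℝ) - x) ≤ max 1 ((κ:ℝ)^2 / ((κ:ℝ) - x)) := le_max_right _ _
        rw [div_le_iff₀ hxκ'] at h4
        nlinarith
      linarith
  -- all elements of A are ≥ some δ0 > 0
  obtain ⟨ε0, hε0, hball0⟩ : ∃ ε > 0, ∀ q : ℝ, dist q 0 < ε → gk κ q < x := by
    have h := (gk_contAt (κ := κ) (le_refl (0:ℝ))).tendsto
    rw [gk_zero] at h
    have := h.eventually (eventually_lt_nhds hx0)
    rw [Metric.eventually_nhds_iff] at this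
    obtain ⟨ε, hε, h'⟩ := this
    exact ⟨ε, hε, fun q hq => h' hq⟩
  have hA_lb : ∀ a ∈ A, ε0 ≤ a := by
    intro a ha
    by_contra hcon
    push_neg at hcon
    have : dist a 0 < ε0 := by
      rw [Real.dist_eq, sub_zero, abs_of_nonneg ha.1]; exact hcon
    exact absurd ha.2 (not_le.mpr (hball0 a this))
  have hq_pos : 0 < sInf A := lt_of_lt_of_le hε0 (le_csInf hne hA_lb)
  have hq_nonneg : (0:ℝ) ≤ sInf A := hq_pos.le
  -- x ≤ gk (sInf A)
  have hge : x ≤ gk κ (sInf A) := by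
    by_contra hcon
    push_neg at hcon
    obtain ⟨ε, hε, hball⟩ : ∃ ε > 0, ∀ q : ℝ, dist q (sInf A) < ε → gk κ q < x := by
      have h := (gk_contAt (κ := κ) hq_nonneg).tendsto
      have := h.eventually (eventually_lt_nhds hcon)
      rw [Metric.eventually_nhds_iff] at this
      obtain ⟨ε, hεp, h'⟩ := this
      exact ⟨ε, hεp, fun q hq => h' hq⟩
    obtain ⟨a, haA, ha⟩ := exists_lt_of_csInf_lt hne (show sInf A < sInf A + ε by linarith)
    have h1 : sInf A ≤ a := csInf_le hbdd haA
    have : dist a (sInf A) < ε := by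
      rw [Real.dist_eq, abs_of_nonneg (by linarith)]; linarith
    exact absurd haA.2 (not_le.mpr (hball a this))
  -- gk (sInf A) ≤ x
  have hle : gk κ (sInf A) ≤ x := by
    by_contra hcon
    push_neg at hcon
    obtain ⟨ε, hε, hball⟩ : ∃ ε > 0, ∀ q : ℝ, dist q (sInf A) < ε → x < gk κ q := by
      have h := (gk_contAt (κ := κ) hq_nonneg).tendsto
      have := h.eventually (eventually_gt_nhds hcon)
      rw [Metric.eventually_nhds_iff] at this
      obtain ⟨ε, hεp, h'⟩ := this
      exact ⟨ε, hεp, fun q hq => h' hq⟩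
    set q' : ℝ := max (sInf A - ε/2) (sInf A / 2) with hq'
    have hq'0 : 0 ≤ q' := le_trans (by positivity) (le_max_right _ _)
    have hq'lt : q' < sInf A := by
      apply max_lt <;> linarith
    have hq'dist : dist q' (sInf A) < ε := by
      rw [Real.dist_eq, abs_of_nonpos (by linarith)]
      have : sInf A - ε/2 ≤ q' := le_max_left _ _
      linarith
    have : q' ∈ A := ⟨hq'0, (hball q' hq'dist).le⟩
    exact absurd (csInf_le hbdd this) (not_le.mpr hq'lt)
  rw [hq_def]
  exact ⟨hq_pos, le_antisymm hle hge, fun q h1 h2 => csInf_le hbdd ⟨h1, h2⟩⟩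

lemma gibbs (hκ : 0 < κ) {q qh : ℝ} (hq : 0 < q) (hqh : 0 < qh) (hne : q ≠ qh) :
    phiK κ qh (gk κ qh) < phiK κ q (gk κ qh) := by
  set S1 := Sk κ qh with hS1
  set S2 := Sk κ q with hS2
  have hS1p : 0 < S1 := Sk_pos hqh.le
  have hS2p : 0 < S2 := Sk_pos hq.le
  set f : ℕ → ℝ := fun t => (qh^t/S1) * Real.log ((q^t/S2)/(qh^t/S1)) with hf
  set g : ℕ → ℝ := fun t => q^t/S2 - qh^t/S1 with hg
  have hterm : ∀ t ∈ Finset.range (κ+1), f t ≤ g t := by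
    intro t _
    have hr : 0 < (q^t/S2)/(qh^t/S1) := by positivity
    have := Real.log_le_sub_one_of_pos hr
    have ha : 0 < qh^t/S1 := by positivity
    calc f t ≤ (qh^t/S1) * ((q^t/S2)/(qh^t/S1) - 1) := by
          exact mul_le_mul_of_nonneg_left this ha.le
      _ = g t := by simp only [hg]; field_simp
  have hstrict : ∃ t ∈ Finset.range (κ+1), f t < g t := by
    have hex : ∃ t ∈ Finset.range (κ+1), (q^t/S2)/(qh^t/S1) ≠ 1 := by
      by_cases hS : S1 = S2
      · refine ⟨1, by simp [Finset.mem_range]; omega, ?_⟩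
        intro hcon
        rw [div_eq_one_iff_eq (by positivity)] at hcon
        rw [hS] at hcon
        apply hne
        have hS2ne : S2 ≠ 0 := ne_of_gt hS2p
        field_simp at hcon
        simpa using hcon
      · refine ⟨0, by simp, ?_⟩
        intro hcon
        rw [div_eq_one_iff_eq (by positivity)] at hcon
        apply hS
        simp only [pow_zero] at hcon
        have hS1ne : S1 ≠ 0 := ne_of_gt hS1p
        have hS2ne : S2 ≠ 0 := ne_of_gt hS2p
        field_simp at hcon
        linarith
    obtain ⟨t, ht, hne1⟩ := hex
    refine ⟨t, ht, ?_⟩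
    have hr : 0 < (q^t/S2)/(qh^t/S1) := by positivity
    have := Real.log_lt_sub_one_of_pos hr hne1
    have ha : 0 < qh^t/S1 := by positivity
    calc f t = (qh^t/S1) * Real.log ((q^t/S2)/(qh^t/S1)) := rfl
      _ < (qh^t/S1) * ((q^t/S2)/(qh^t/S1) - 1) := by
          exact mul_lt_mul_of_pos_left this ha
      _ = g t := by simp only [hg]; field_simp
  have hsum : ∑ t ∈ Finset.range (κ+1), f t < ∑ t ∈ Finset.range (κ+1), g t :=
    Finset.sum_lt_sum hterm hstrict
  have hgsum : ∑ t ∈ Finset.range (κ+1), g t = 0 := by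
    rw [hg]
    rw [Finset.sum_sub_distrib]
    rw [← Finset.sum_div, ← Finset.sum_div]
    rw [show (∑ i ∈ Finset.range (κ+1), q ^ i) = S2 from rfl,
        show (∑ i ∈ Finset.range (κ+1), qh ^ i) = S1 from rfl]
    field_simp
    norm_num
  have hfsum : ∑ t ∈ Finset.range (κ+1), f t
      = gk κ qh * (Real.log q - Real.log qh) + Real.log S1 - Real.log S2 := by
    have hcongr : ∀ t ∈ Finset.range (κ+1), f t
        = ((Real.log q - Real.log qh) * ((t:ℝ) * qh^t) + (Real.log S1 - Real.log S2) * qh^t)/S1 := by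
      intro t _
      have hlog : Real.log ((q^t/S2)/(qh^t/S1))
          = (t:ℝ)*Real.log q - Real.log S2 - ((t:ℝ)*Real.log qh - Real.log S1) := by
        rw [Real.log_div (by positivity) (by positivity), Real.log_div (by positivity) (ne_of_gt hS1p),
          Real.log_div (by positivity) (ne_of_gt hS2p), Real.log_pow, Real.log_pow]
      rw [hf]
      simp only
      rw [hlog]
      field_simp
      ring
    rw [Finset.sum_congr rfl hcongr]
    rw [← Finset.sum_div, Finset.sum_add_distrib, ← Finset.mul_sum, ← Finset.mul_sum]
    rw [show (∑ t ∈ Finset.range (κ+1), (t:ℝ) * qh^t) = Nk κ qh from rfl,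
        show (∑ t ∈ Finset.range (κ+1), qh^t) = S1 from rfl]
    rw [gk]
    rw [← hS1]
    field_simp
    ring
  rw [hfsum, hgsum] at hsum
  rw [phiK, phiK, ← hS1, ← hS2]
  set x := gk κ qh
  linarith

lemma tgP_coe (κ : ℕ) (x : ℝ) : tgP (κ:ℕ∞) x = (Sk κ (tgQ (κ:ℕ∞) x))⁻¹ := by
  rw [tgP, if_neg (by exact_mod_cast WithTop.coe_ne_top)]
  simp [Sk]

lemma tgPMF_coe (κ : ℕ) (x : ℝ) (t : ℕ) :
    tgPMF (κ:ℕ∞) x t = if t ≤ κ then (Sk κ (tgQ (κ:ℕ∞) x))⁻¹ * tgQ (κ:ℕ∞) x ^ t else 0 := by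
  rw [tgPMF, tgP_coe]
  congr 1
  simp [Nat.cast_le]

lemma Hmax_eq_phi (hκ : 0 < κ) {x : ℝ} (hx0 : 0 < x) (hxκ : x < κ) :
    Hmax (κ:ℕ∞) x = phiK κ (tgQ (κ:ℕ∞) x) x := by
  obtain ⟨hqpos, hgx, -⟩ := tgQ_spec hκ hx0 hxκ
  set qh := tgQ (κ:ℕ∞) x with hqh
  have hSp : 0 < Sk κ qh := Sk_pos hqpos.le
  set p : ℝ := (Sk κ qh)⁻¹ with hp
  have hpp : 0 < p := by positivity
  set f : ℕ → ℝ := fun t => tgPMF (κ:ℕ∞) x t * Real.log (tgPMF (κ:ℕ∞) x t) with hf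
  have hvanish : ∀ t ∉ Finset.range (κ+1), f t = 0 := by
    intro t ht
    simp only [Finset.mem_range] at ht
    simp [hf, tgPMF_coe, Nat.lt_irrefl, show ¬ t ≤ κ by omega]
  have hHmax : Hmax (κ:ℕ∞) x = -∑ t ∈ Finset.range (κ+1), f t := by
    rw [Hmax, tsum_eq_sum hvanish]
  have hterm : ∀ t ∈ Finset.range (κ+1), f t
      = (Real.log p * p) * qh ^ t + (Real.log qh * p) * ((t:ℝ) * qh ^ t) := by
    intro t ht
    simp only [Finset.mem_range] at ht
    have h1 : tgPMF (κ:ℕ∞) x t = p * qh ^ t := by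
      rw [tgPMF_coe, if_pos (by omega)]
    rw [hf]
    simp only
    rw [h1, Real.log_mul (ne_of_gt hpp) (by positivity), Real.log_pow]
    ring
  have hsum : ∑ t ∈ Finset.range (κ+1), f t = Real.log p + x * Real.log qh := by
    rw [Finset.sum_congr rfl hterm, Finset.sum_add_distrib, ← Finset.mul_sum, ← Finset.mul_sum]
    rw [show (∑ t ∈ Finset.range (κ+1), qh ^ t) = Sk κ qh from rfl,
        show (∑ t ∈ Finset.range (κ+1), (t:ℝ) * qh ^ t) = Nk κ qh from rfl]
    have h2 : Nk κ qh = x * Sk κ qh := by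
      have := hgx
      rw [gk, div_eq_iff (ne_of_gt hSp)] at this
      linarith [this]
    rw [h2, hp]
    field_simp
  rw [hHmax, hsum, phiK, hp, Real.log_inv]
  ring

lemma Sk_zero : Sk κ (0:ℝ) = 1 := by
  rw [Sk, Finset.sum_eq_single 0]
  · simp
  · intro t _ ht; simp [zero_pow ht]
  · simp

lemma Hmax_of_tgQ_zero {x : ℝ} (hq : tgQ (κ:ℕ∞) x = 0) : Hmax (κ:ℕ∞) x = 0 := by
  have hpmf : ∀ t : ℕ, tgPMF (κ:ℕ∞) x t * Real.log (tgPMF (κ:ℕ∞) x t) = 0 := by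
    intro t
    rw [tgPMF_coe, hq, Sk_zero]
    rcases Nat.eq_zero_or_pos t with h | h
    · simp [h]
    · by_cases ht : t ≤ κ <;> simp [ht, zero_pow (by omega : t ≠ 0)]
  rw [Hmax]
  simp only [hpmf]
  simp

lemma tgQ_zero (hκ : 0 < κ) : tgQ (κ:ℕ∞) (0:ℝ) = 0 := by
  rw [tgQ]
  apply le_antisymm
  · exact csInf_le ⟨0, fun q hq => hq.1⟩ ⟨le_refl 0, by rw [tgMean_coe, gk_zero]⟩
  · exact le_csInf ⟨0, le_refl 0, by rw [tgMean_coe, gk_zero]⟩ (fun q hq => hq.1)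

lemma tgQ_kappa (hκ : 0 < κ) : tgQ (κ:ℕ∞) (κ:ℝ) = 0 := by
  rw [tgQ]
  have : {q : ℝ | 0 ≤ q ∧ (κ:ℝ) ≤ tgMean (κ:ℕ∞) q} = ∅ := by
    ext q
    simp only [Set.mem_setOf_eq, Set.mem_empty_iff_false, iff_false, not_and]
    intro hq
    rw [tgMean_coe]
    exact not_le.mpr (gk_lt_kappa hκ hq)
  rw [this, Real.sInf_empty]

lemma Hmax_zero (hκ : 0 < κ) : Hmax (κ:ℕ∞) (0:ℝ) = 0 := Hmax_of_tgQ_zero (tgQ_zero hκ)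
lemma Hmax_kappa (hκ : 0 < κ) : Hmax (κ:ℕ∞) (κ:ℝ) = 0 := Hmax_of_tgQ_zero (tgQ_kappa hκ)

lemma Hmax_nonneg (hκ : 0 < κ) {x : ℝ} (hx0 : 0 ≤ x) (hxκ : x ≤ (κ:ℝ)) :
    0 ≤ Hmax (κ:ℕ∞) x := by
  rcases eq_or_lt_of_le hx0 with h | hx0'
  · rw [← h, Hmax_zero hκ]
  rcases eq_or_lt_of_le hxκ with h | hxκ'
  · rw [h, Hmax_kappa hκ]
  obtain ⟨hqpos, hgx, -⟩ := tgQ_spec hκ hx0' hxκ'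
  set qh := tgQ (κ:ℕ∞) x with hqh
  have hSp : 0 < Sk κ qh := Sk_pos hqpos.le
  set f : ℕ → ℝ := fun t => tgPMF (κ:ℕ∞) x t * Real.log (tgPMF (κ:ℕ∞) x t) with hf
  have hvanish : ∀ t ∉ Finset.range (κ+1), f t = 0 := by
    intro t ht
    simp only [Finset.mem_range] at ht
    simp [hf, tgPMF_coe, show ¬ t ≤ κ by omega]
  rw [Hmax, tsum_eq_sum hvanish, neg_nonneg]
  apply Finset.sum_nonpos
  intro t ht
  simp only [Finset.mem_range] at ht
  have h1 : tgPMF (κ:ℕ∞) x t = (Sk κ qh)⁻¹ * qh ^ t := by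
    rw [tgPMF_coe, if_pos (by omega)]
  have hple : tgPMF (κ:ℕ∞) x t ≤ 1 := by
    rw [h1, inv_mul_le_iff₀ hSp, mul_one]
    apply Finset.single_le_sum (f := fun t => qh ^ t)
      (fun t _ => pow_nonneg hqpos.le t) (Finset.mem_range.mpr ht)
  have hp0 : 0 ≤ tgPMF (κ:ℕ∞) x t := by rw [h1]; positivity
  simp only [hf]
  exact mul_nonpos_of_nonneg_of_nonpos hp0 (Real.log_nonpos hp0 hple)

lemma Sk_gt_one (hκ : 0 < κ) {q : ℝ} (hq : 0 < q) : 1 < Sk κ q := by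
  have h : ∑ t ∈ ({0, 1} : Finset ℕ), q ^ t ≤ Sk κ q := by
    apply Finset.sum_le_sum_of_subset_of_nonneg
    · intro t ht
      simp only [Finset.mem_insert, Finset.mem_singleton] at ht
      rcases ht with h | h <;> simp [h, Finset.mem_range] <;> omega
    · intro t _ _; positivity
  rw [Finset.sum_pair (by omega : (0:ℕ) ≠ 1)] at h
  simp only [pow_zero, pow_one] at h
  linarith

lemma Sk_gt_pow (hκ : 0 < κ) {q : ℝ} (hq : 0 < q) : q ^ κ < Sk κ q := by
  have h : ∑ t ∈ ({0, κ} : Finset ℕ), q ^ t ≤ Sk κ q := by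
    apply Finset.sum_le_sum_of_subset_of_nonneg
    · intro t ht
      simp only [Finset.mem_insert, Finset.mem_singleton] at ht
      rcases ht with h | h <;> simp [h, Finset.mem_range] <;> omega
    · intro t _ _; positivity
  rw [Finset.sum_pair (by omega : (0:ℕ) ≠ κ)] at h
  simp only [pow_zero] at h
  linarith

lemma Hmax_lt_phi (hκ : 0 < κ) {x q : ℝ} (hq : 0 < q)
    (hcase : x = 0 ∨ x = (κ:ℝ) ∨ (0 < x ∧ x < (κ:ℝ) ∧ q ≠ tgQ (κ:ℕ∞) x)) :
    Hmax (κ:ℕ∞) x < phiK κ q x := by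
  rcases hcase with h | h | ⟨hx0, hxκ, hne⟩
  · subst h
    rw [Hmax_zero hκ, phiK]
    simp only [zero_mul, sub_zero]
    exact Real.log_pos (Sk_gt_one hκ hq)
  · subst h
    rw [Hmax_kappa hκ, phiK]
    have h1 : (κ:ℝ) * Real.log q = Real.log (q ^ κ) := by rw [Real.log_pow]
    rw [h1]
    have h2 := Real.log_lt_log (show (0:ℝ) < q ^ κ by positivity) (Sk_gt_pow hκ hq)
    linarith
  · obtain ⟨hqpos, hgx, -⟩ := tgQ_spec hκ hx0 hxκ
    rw [Hmax_eq_phi hκ hx0 hxκ]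
    have := gibbs hκ hq hqpos (by exact hne)
    rwa [hgx] at this

lemma Hmax_le_phi (hκ : 0 < κ) {x q : ℝ} (hx0 : 0 ≤ x) (hxκ : x ≤ (κ:ℝ)) (hq : 0 < q) :
    Hmax (κ:ℕ∞) x ≤ phiK κ q x := by
  rcases eq_or_lt_of_le hx0 with h | hx0'
  · exact (Hmax_lt_phi hκ hq (Or.inl h.symm)).le
  rcases eq_or_lt_of_le hxκ with h | hxκ'
  · exact (Hmax_lt_phi hκ hq (Or.inr (Or.inl h))).le
  by_cases hne : q = tgQ (κ:ℕ∞) x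
  · subst hne
    exact le_of_eq (Hmax_eq_phi hκ hx0' hxκ')
  · exact (Hmax_lt_phi hκ hq (Or.inr (Or.inr ⟨hx0', hxκ', hne⟩))).le

lemma phiK_affine (q a b p r : ℝ) (h : p + r = 1) :
    phiK κ q (p * a + r * b) = p * phiK κ q a + r * phiK κ q b := by
  have h' : r = 1 - p := by linarith
  subst h'
  simp only [phiK]
  ring

lemma Hmax_concaveOn (hκ : 0 < κ) :
    ConcaveOn ℝ (Set.Icc (0:ℝ) (κ:ℝ)) (fun x => Hmax (κ:ℕ∞) x) := by
  refine ⟨convex_Icc _ _, ?_⟩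
  intro a ha b hb p r hp hr hpr
  simp only [smul_eq_mul]
  rcases eq_or_ne a b with hab | hab
  · subst hab
    have e : p * a + r * a = a := by rw [← add_mul, hpr, one_mul]
    rw [e, ← add_mul, hpr, one_mul]
  rcases eq_or_lt_of_le hp with hp0 | hp0
  · have hr1 : r = 1 := by linarith
    rw [← hp0, hr1]; simp
  rcases eq_or_lt_of_le hr with hr0 | hr0
  · have hp1 : p = 1 := by linarith
    rw [← hr0, hp1]; simp
  set m := p * a + r * b with hm
  have hm0 : 0 < m := by
    rcases hab.lt_or_gt with h | h <;> nlinarith [ha.1, hb.1]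
  have hmκ : m < (κ:ℝ) := by
    rcases hab.lt_or_gt with h | h <;> nlinarith [ha.2, hb.2]
  obtain ⟨hqm, hgm, -⟩ := tgQ_spec hκ hm0 hmκ
  calc p * Hmax (κ:ℕ∞) a + r * Hmax (κ:ℕ∞) b
      ≤ p * phiK κ (tgQ (κ:ℕ∞) m) a + r * phiK κ (tgQ (κ:ℕ∞) m) b := by
        apply add_le_add
        · exact mul_le_mul_of_nonneg_left (Hmax_le_phi hκ ha.1 ha.2 hqm) hp
        · exact mul_le_mul_of_nonneg_left (Hmax_le_phi hκ hb.1 hb.2 hqm) hr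
    _ = phiK κ (tgQ (κ:ℕ∞) m) m := (phiK_affine _ _ _ _ _ hpr).symm
    _ = Hmax (κ:ℕ∞) m := (Hmax_eq_phi hκ hm0 hmκ).symm

lemma Hmax_strict_mid (hκ : 0 < κ) {a b : ℝ} (ha : a ∈ Set.Icc (0:ℝ) (κ:ℝ))
    (hb : b ∈ Set.Icc (0:ℝ) (κ:ℝ)) (hab : a ≠ b) :
    Hmax (κ:ℕ∞) a + Hmax (κ:ℕ∞) b < 2 * Hmax (κ:ℕ∞) ((a+b)/2) := by
  set m := (a+b)/2 with hm
  have hm0 : 0 < m := by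
    rcases hab.lt_or_gt with h | h <;> (rw [hm]; nlinarith [ha.1, hb.1])
  have hmκ : m < (κ:ℝ) := by
    rcases hab.lt_or_gt with h | h <;> (rw [hm]; nlinarith [ha.2, hb.2])
  obtain ⟨hqm, hgm, -⟩ := tgQ_spec hκ hm0 hmκ
  set qm := tgQ (κ:ℕ∞) m with hqmdef
  have haff : phiK κ qm a + phiK κ qm b = 2 * phiK κ qm m := by
    rw [hm, phiK, phiK, phiK]; ring
  have key : Hmax (κ:ℕ∞) a + Hmax (κ:ℕ∞) b < phiK κ qm a + phiK κ qm b := by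
    have hub_a := Hmax_le_phi hκ ha.1 ha.2 hqm
    have hub_b := Hmax_le_phi hκ hb.1 hb.2 hqm
    rcases eq_or_lt_of_le ha.1 with ha0 | ha0
    · exact add_lt_add_of_lt_of_le (Hmax_lt_phi hκ hqm (Or.inl ha0.symm)) hub_b
    rcases eq_or_lt_of_le ha.2 with haκ | haκ
    · exact add_lt_add_of_lt_of_le (Hmax_lt_phi hκ hqm (Or.inr (Or.inl haκ))) hub_b
    rcases eq_or_lt_of_le hb.1 with hb0 | hb0
    · exact add_lt_add_of_le_of_lt hub_a (Hmax_lt_phi hκ hqm (Or.inl hb0.symm))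
    rcases eq_or_lt_of_le hb.2 with hbκ | hbκ
    · exact add_lt_add_of_le_of_lt hub_a (Hmax_lt_phi hκ hqm (Or.inr (Or.inl hbκ)))
    -- both interior
    obtain ⟨hqa, hga, -⟩ := tgQ_spec hκ ha0 haκ
    obtain ⟨hqb, hgb, -⟩ := tgQ_spec hκ hb0 hbκ
    have hqab : tgQ (κ:ℕ∞) a ≠ tgQ (κ:ℕ∞) b := by
      intro hcon
      apply hab
      rw [← hga, ← hgb, hcon]
    by_cases hqa' : qm = tgQ (κ:ℕ∞) a
    · refine add_lt_add_of_le_of_lt hub_a (Hmax_lt_phi hκ hqm (Or.inr (Or.inr ⟨hb0, hbκ, ?_⟩)))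
      rw [hqa']; exact hqab
    · exact add_lt_add_of_lt_of_le
        (Hmax_lt_phi hκ hqm (Or.inr (Or.inr ⟨ha0, haκ, hqa'⟩))) hub_b
  calc Hmax (κ:ℕ∞) a + Hmax (κ:ℕ∞) b < phiK κ qm a + phiK κ qm b := key
    _ = 2 * phiK κ qm m := haff
    _ = 2 * Hmax (κ:ℕ∞) m := by rw [← Hmax_eq_phi hκ hm0 hmκ]

lemma Hmax_lb_near_zero (hκ : 0 < κ) {x : ℝ} (hx0 : 0 < x) (hx1 : ((κ:ℝ)+1)*x ≤ 1) :
    -x * Real.log (((κ:ℝ)+1)*x) ≤ Hmax (κ:ℕ∞) x := by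
  have hκ1 : (1:ℝ) ≤ (κ:ℝ) := by exact_mod_cast hκ
  have hxκ : x < (κ:ℝ) := by nlinarith
  obtain ⟨hqpos, hgx, hmin⟩ := tgQ_spec hκ hx0 hxκ
  have hgl := gk_lb_small (κ := κ) hκ (show (0:ℝ) ≤ ((κ:ℝ)+1)*x by positivity) (by linarith)
  have heq : ((κ:ℝ)+1)*x / ((κ:ℝ)+1) = x := by field_simp
  rw [heq] at hgl
  have hqle : tgQ (κ:ℕ∞) x ≤ ((κ:ℝ)+1)*x := hmin _ (by positivity) hgl
  rw [Hmax_eq_phi hκ hx0 hxκ, phiK]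
  have h1 : 0 ≤ Real.log (Sk κ (tgQ (κ:ℕ∞) x)) := Real.log_nonneg (Sk_one_le hqpos.le)
  have h2 : Real.log (tgQ (κ:ℕ∞) x) ≤ Real.log (((κ:ℝ)+1)*x) := Real.log_le_log hqpos hqle
  nlinarith [mul_le_mul_of_nonneg_left h2 hx0.le]

lemma Sk_inv {q : ℝ} (hq : 0 < q) : Sk κ q⁻¹ = Sk κ q / q ^ κ := by
  rw [eq_div_iff (pow_ne_zero _ (ne_of_gt hq))]
  rw [Sk, Sk, Finset.sum_mul]
  rw [← Finset.sum_range_reflect (fun t => q ^ t) (κ+1)]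
  apply Finset.sum_congr rfl
  intro t ht
  simp only [Finset.mem_range] at ht
  have h1 : κ + 1 - 1 - t = κ - t := by omega
  have h2 : κ = t + (κ - t) := by omega
  rw [h1]
  rw [show q ^ κ = q ^ t * q ^ (κ - t) by rw [← pow_add, ← h2]]
  rw [inv_pow]
  field_simp

lemma Hmax_symm (hκ : 0 < κ) {x : ℝ} (hx0 : 0 ≤ x) (hxκ : x ≤ (κ:ℝ)) :
    Hmax (κ:ℕ∞) ((κ:ℝ) - x) = Hmax (κ:ℕ∞) x := by
  have key : ∀ y : ℝ, 0 < y → y < (κ:ℝ) → Hmax (κ:ℕ∞) ((κ:ℝ) - y) ≤ Hmax (κ:ℕ∞) y := by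
    intro y hy0 hyκ
    obtain ⟨hqpos, hgy, -⟩ := tgQ_spec hκ hy0 hyκ
    set qh := tgQ (κ:ℕ∞) y with hqh
    have h1 : Hmax (κ:ℕ∞) ((κ:ℝ) - y) ≤ phiK κ qh⁻¹ ((κ:ℝ) - y) :=
      Hmax_le_phi hκ (by linarith) (by linarith) (inv_pos.mpr hqpos)
    have h2 : phiK κ qh⁻¹ ((κ:ℝ) - y) = phiK κ qh y := by
      rw [phiK, phiK, Sk_inv hqpos,
        Real.log_div (ne_of_gt (Sk_pos hqpos.le)) (pow_ne_zero _ (ne_of_gt hqpos)),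
        Real.log_pow, Real.log_inv]
      ring
    rw [Hmax_eq_phi hκ hy0 hyκ]
    rw [← hqh]
    linarith
  rcases eq_or_lt_of_le hx0 with h | h
  · rw [← h, sub_zero, Hmax_kappa hκ, Hmax_zero hκ]
  rcases eq_or_lt_of_le hxκ with h' | h'
  · rw [h', sub_self, Hmax_zero hκ, Hmax_kappa hκ]
  · apply le_antisymm (key x h h')
    have h2 := key ((κ:ℝ) - x) (by linarith) (by linarith)
    rwa [sub_sub_cancel] at h2

lemma Hmax_cwa_zero (hκ : 0 < κ) :
    ContinuousWithinAt (fun x => Hmax (κ:ℕ∞) x) (Set.Icc (0:ℝ) (κ:ℝ)) 0 := by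
  have hκ1 : (1:ℝ) ≤ (κ:ℝ) := by exact_mod_cast hκ
  rw [ContinuousWithinAt, Hmax_zero hκ]
  have hub : ∀ x ∈ Set.Icc (0:ℝ) (κ:ℝ), Hmax (κ:ℕ∞) x ≤ Real.log (Sk κ x) - x * Real.log x := by
    intro x hx
    rcases eq_or_lt_of_le hx.1 with h | h
    · rw [← h, Hmax_zero hκ, Sk_zero]
      simp
    · exact Hmax_le_phi hκ hx.1 hx.2 h
  have hlb : ∀ x ∈ Set.Icc (0:ℝ) (κ:ℝ), 0 ≤ Hmax (κ:ℕ∞) x := fun x hx => Hmax_nonneg hκ hx.1 hx.2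
  have hglim : Filter.Tendsto (fun x : ℝ => Real.log (Sk κ x) - x * Real.log x)
      (nhdsWithin 0 (Set.Icc (0:ℝ) (κ:ℝ))) (nhds 0) := by
    have hc1 : ContinuousAt (fun x : ℝ => Real.log (Sk κ x)) 0 := by
      have hg : ContinuousAt Real.log (Sk κ (0:ℝ)) := by
        rw [Sk_zero]; exact Real.continuousAt_log one_ne_zero
      have := hg.comp (Sk_cont (κ := κ)).continuousAt
      exact this
    have hc2 : ContinuousAt (fun x : ℝ => Real.log (Sk κ x) - x * Real.log x) 0 :=
      hc1.sub Real.continuous_mul_log.continuousAt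
    have := hc2.continuousWithinAt (s := Set.Icc (0:ℝ) (κ:ℝ))
    rw [ContinuousWithinAt] at this
    convert this using 2
    rw [Sk_zero]
    simp
  apply tendsto_of_tendsto_of_tendsto_of_le_of_le' tendsto_const_nhds hglim
  · exact eventually_mem_nhdsWithin.mono hlb
  · exact eventually_mem_nhdsWithin.mono hub

lemma Hmax_contOn (hκ : 0 < κ) :
    ContinuousOn (fun x => Hmax (κ:ℕ∞) x) (Set.Icc (0:ℝ) (κ:ℝ)) := by
  have hκ0 : (0:ℝ) < (κ:ℝ) := by exact_mod_cast hκ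
  have hIoo : ContinuousOn (fun x => Hmax (κ:ℕ∞) x) (Set.Ioo (0:ℝ) (κ:ℝ)) := by
    have hconc := (Hmax_concaveOn hκ).subset Set.Ioo_subset_Icc_self (convex_Ioo _ _)
    have h1 := ConvexOn.continuousOn isOpen_Ioo hconc.neg
    have := h1.neg
    simpa using this
  intro x hx
  rcases eq_or_lt_of_le hx.1 with h0 | h0
  · rw [← h0]; exact Hmax_cwa_zero hκ
  rcases eq_or_lt_of_le hx.2 with hκ' | hκ'
  · -- x = κ : use symmetry and continuity at 0
    have hmap : Set.MapsTo (fun y : ℝ => (κ:ℝ) - y) (Set.Icc 0 (κ:ℝ)) (Set.Icc 0 (κ:ℝ)) := by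
      intro y hy
      constructor <;> simp only [Set.mem_Icc] at hy ⊢ <;> [linarith [hy.2]; linarith [hy.1]]
    have hinner : ContinuousWithinAt (fun y : ℝ => (κ:ℝ) - y) (Set.Icc 0 (κ:ℝ)) x :=
      (continuous_const.sub continuous_id).continuousWithinAt
    have hcomp : ContinuousWithinAt ((fun z => Hmax (κ:ℕ∞) z) ∘ (fun y : ℝ => (κ:ℝ) - y))
        (Set.Icc 0 (κ:ℝ)) x := by
      apply ContinuousWithinAt.comp _ hinner hmap
      have he : (κ:ℝ) - x = 0 := by rw [hκ']; ring
      rw [he]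
      exact Hmax_cwa_zero hκ
    apply hcomp.congr
    · intro y hy
      exact (Hmax_symm hκ hy.1 hy.2).symm
    · simp only [Function.comp]
      exact (Hmax_symm hκ hx.1 hx.2).symm
  · exact (hIoo.continuousAt (Ioo_mem_nhds h0 hκ')).continuousWithinAt

lemma Hmax_combo (hκ : 0 < κ) {a b t : ℝ} (ha : a ∈ Set.Icc (0:ℝ) (κ:ℝ))
    (hb : b ∈ Set.Icc (0:ℝ) (κ:ℝ)) (ht0 : 0 ≤ t) (ht1 : t ≤ 1) :
    (1-t) * Hmax (κ:ℕ∞) a + t * Hmax (κ:ℕ∞) b ≤ Hmax (κ:ℕ∞) ((1-t)*a + t*b) := by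
  have := (Hmax_concaveOn hκ).2 ha hb (by linarith : (0:ℝ) ≤ 1 - t) ht0 (by ring)
  simpa using this

lemma mem_transport_iff (κ : ℕ) {m n : ℕ} (R : Fin m → ℕ) (C : Fin n → ℕ)
    (Z : Fin m → Fin n → ℝ) :
    Z ∈ transportPolytope (κ:ℕ∞) R C ↔
      (∀ i j, 0 ≤ Z i j) ∧ (∀ i j, Z i j ≤ (κ:ℝ)) ∧
      (∀ i, ∑ j, Z i j = (R i:ℝ)) ∧ (∀ j, ∑ i, Z i j = (C j:ℝ)) := by
  simp only [transportPolytope, Set.mem_setOf_eq]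
  have hne : (κ:ℕ∞) ≠ ⊤ := by exact_mod_cast WithTop.coe_ne_top
  have htn : (((κ:ℕ∞)).toNat : ℝ) = (κ:ℝ) := by simp
  constructor
  · rintro ⟨h1,h2,h3,h4⟩; exact ⟨h1, fun i j => htn ▸ h2 i j hne, h3, h4⟩
  · rintro ⟨h1,h2,h3,h4⟩; exact ⟨h1, fun i j _ => htn ▸ h2 i j, h3, h4⟩

lemma combo_mem_transport (κ : ℕ) {m n : ℕ} {R : Fin m → ℕ} {C : Fin n → ℕ}
    {A B : Fin m → Fin n → ℝ} (hA : A ∈ transportPolytope (κ:ℕ∞) R C)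
    (hB : B ∈ transportPolytope (κ:ℕ∞) R C) {t : ℝ} (ht0 : 0 ≤ t) (ht1 : t ≤ 1) :
    (fun i j => (1-t) * A i j + t * B i j) ∈ transportPolytope (κ:ℕ∞) R C := by
  rw [mem_transport_iff] at hA hB ⊢
  obtain ⟨hA1, hA2, hA3, hA4⟩ := hA
  obtain ⟨hB1, hB2, hB3, hB4⟩ := hB
  refine ⟨?_, ?_, ?_, ?_⟩
  · intro i j
    have := hA1 i j; have := hB1 i j
    nlinarith
  · intro i j
    have := hA2 i j; have := hB2 i j
    nlinarith
  · intro i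
    simp only [Finset.sum_add_distrib, ← Finset.mul_sum, hA3 i, hB3 i]
    ring
  · intro j
    simp only [Finset.sum_add_distrib, ← Finset.mul_sum, hA4 j, hB4 j]
    ring

end EntropyAux

set_option maxHeartbeats 1000000 in
/-- **Lemma.** If `Π_κ(R,C)` contains a matrix with all entries strictly between `0` and
`κ`, then `Z ↦ ∑_{ij} H^max_κ(z_{ij})` attains its maximum over `Π_κ(R,C)` at a unique
matrix, whose entries all lie strictly between `0` and `κ`. -/
theorem entropy_unique_interior_maximizer {m n : ℕ} (κ : ℕ) (hκ : 0 < κ)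
    (R : Fin m → ℕ) (C : Fin n → ℕ) (hN : ∑ i, R i = ∑ j, C j)
    (hint : ∃ W ∈ transportPolytope (κ : ℕ∞) R C,
      ∀ i j, 0 < W i j ∧ W i j < (κ : ℝ)) :
    ∃ Z ∈ transportPolytope (κ : ℕ∞) R C,
      (∀ i j, 0 < Z i j ∧ Z i j < (κ : ℝ)) ∧
      ∀ W ∈ transportPolytope (κ : ℕ∞) R C, W ≠ Z →
        ∑ i, ∑ j, Hmax (κ : ℕ∞) (W i j) < ∑ i, ∑ j, Hmax (κ : ℕ∞) (Z i j) := by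
  classical
  obtain ⟨W, hW, hWint⟩ := hint
  by_cases hmn : m = 0 ∨ n = 0
  · refine ⟨W, hW, fun i j => ?_, fun W' hW' hne => ?_⟩
    · rcases hmn with h | h
      · subst h; exact i.elim0
      · subst h; exact j.elim0
    · exfalso
      apply hne
      funext i j
      rcases hmn with h | h
      · subst h; exact i.elim0
      · subst h; exact j.elim0
  push_neg at hmn
  set P := transportPolytope (κ:ℕ∞) R C with hPdef
  set F : (Fin m → Fin n → ℝ) → ℝ := fun Y => ∑ i, ∑ j, Hmax (κ:ℕ∞) (Y i j) with hF
  have hκ1 : (1:ℝ) ≤ (κ:ℝ) := by exact_mod_cast hκ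
  -- membership facts
  have hmemIcc : ∀ Y ∈ P, ∀ i j, Y i j ∈ Set.Icc (0:ℝ) (κ:ℝ) := by
    intro Y hY i j
    rw [hPdef, mem_transport_iff] at hY
    exact ⟨hY.1 i j, hY.2.1 i j⟩
  -- F as a sum over pairs
  have hFprod : ∀ Y : Fin m → Fin n → ℝ,
      F Y = ∑ p ∈ (Finset.univ : Finset (Fin m × Fin n)), Hmax (κ:ℕ∞) (Y p.1 p.2) := by
    intro Y
    rw [hF]
    rw [← Finset.univ_product_univ, Finset.sum_product]
  -- compactness of P
  have capp : ∀ (i : Fin m) (j : Fin n),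
      Continuous (fun Y : Fin m → Fin n → ℝ => Y i j) :=
    fun i j => (continuous_apply j).comp (continuous_apply i)
  have hPcomp : IsCompact P := by
    have hQ : IsCompact (Set.univ.pi fun _ : Fin m =>
        (Set.univ.pi fun _ : Fin n => Set.Icc (0:ℝ) (κ:ℝ)) : Set (Fin m → Fin n → ℝ)) :=
      isCompact_univ_pi fun i => isCompact_univ_pi fun j => isCompact_Icc
    apply hQ.of_isClosed_subset
    · have hP1 : IsClosed {Y : Fin m → Fin n → ℝ | ∀ i j, 0 ≤ Y i j} := by
        have : {Y : Fin m → Fin n → ℝ | ∀ i j, 0 ≤ Y i j}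
            = ⋂ i, ⋂ j, {Y : Fin m → Fin n → ℝ | 0 ≤ Y i j} := by ext; simp
        rw [this]
        exact isClosed_iInter fun i => isClosed_iInter fun j =>
          isClosed_le continuous_const (capp i j)
      have hP2 : IsClosed {Y : Fin m → Fin n → ℝ | ∀ i j, Y i j ≤ (κ:ℝ)} := by
        have : {Y : Fin m → Fin n → ℝ | ∀ i j, Y i j ≤ (κ:ℝ)}
            = ⋂ i, ⋂ j, {Y : Fin m → Fin n → ℝ | Y i j ≤ (κ:ℝ)} := by ext; simp
        rw [this]
        exact isClosed_iInter fun i => isClosed_iInter fun j =>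
          isClosed_le (capp i j) continuous_const
      have hP3 : IsClosed {Y : Fin m → Fin n → ℝ | ∀ i, ∑ j, Y i j = (R i : ℝ)} := by
        have : {Y : Fin m → Fin n → ℝ | ∀ i, ∑ j, Y i j = (R i:ℝ)}
            = ⋂ i, {Y : Fin m → Fin n → ℝ | ∑ j, Y i j = (R i:ℝ)} := by ext; simp
        rw [this]
        exact isClosed_iInter fun i =>
          isClosed_eq (continuous_finset_sum _ fun j _ => capp i j) continuous_const
      have hP4 : IsClosed {Y : Fin m → Fin n → ℝ | ∀ j, ∑ i, Y i j = (C j : ℝ)} := by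
        have : {Y : Fin m → Fin n → ℝ | ∀ j, ∑ i, Y i j = (C j:ℝ)}
            = ⋂ j, {Y : Fin m → Fin n → ℝ | ∑ i, Y i j = (C j:ℝ)} := by ext; simp
        rw [this]
        exact isClosed_iInter fun j =>
          isClosed_eq (continuous_finset_sum _ fun i _ => capp i j) continuous_const
      have hPeq : P = {Y : Fin m → Fin n → ℝ | ∀ i j, 0 ≤ Y i j}
          ∩ ({Y | ∀ i j, Y i j ≤ (κ:ℝ)}
          ∩ ({Y | ∀ i, ∑ j, Y i j = (R i:ℝ)} ∩ {Y | ∀ j, ∑ i, Y i j = (C j:ℝ)})) := by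
        ext Y
        rw [hPdef, mem_transport_iff]
        all_goals simp only [Set.mem_inter_iff, Set.mem_setOf_eq]
        all_goals tauto
      rw [hPeq]
      exact hP1.inter (hP2.inter (hP3.inter hP4))
    · intro Y hY
      exact Set.mem_univ_pi.mpr fun i => Set.mem_univ_pi.mpr fun j => hmemIcc Y hY i j
  -- continuity of F on P
  have hFcont : ContinuousOn F P := by
    rw [hF]
    apply continuousOn_finset_sum
    intro i _
    apply continuousOn_finset_sum
    intro j _
    have := (Hmax_contOn hκ).comp ((capp i j).continuousOn (s := P))
      (fun Y hY => hmemIcc Y hY i j)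
    exact this
  -- existence of a maximizer
  obtain ⟨Z, hZP, hZmax⟩ := hPcomp.exists_isMaxOn ⟨W, hW⟩ hFcont
  have hZmax' : ∀ Y ∈ P, F Y ≤ F Z := fun Y hY => hZmax hY
  have hZIcc := hmemIcc Z hZP
  have hWIcc := hmemIcc W hW
  -- interiority
  have hZint : ∀ i j, 0 < Z i j ∧ Z i j < (κ:ℝ) := by
    by_contra hbad
    push_neg at hbad
    obtain ⟨i0, j0, hbad⟩ := hbad
    set p0 : Fin m × Fin n := (i0, j0) with hp0
    have hcase : Z i0 j0 = 0 ∨ Z i0 j0 = (κ:ℝ) := by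
      rcases eq_or_lt_of_le (hZIcc i0 j0).1 with h | h
      · exact Or.inl h.symm
      · exact Or.inr (le_antisymm (hZIcc i0 j0).2 (hbad h))
    have hHz0 : Hmax (κ:ℕ∞) (Z i0 j0) = 0 := by
      rcases hcase with h | h <;> rw [h]
      · exact Hmax_zero hκ
      · exact Hmax_kappa hκ
    -- the displacement magnitude at the bad coordinate
    set d : ℝ := if Z i0 j0 = 0 then W i0 j0 else (κ:ℝ) - W i0 j0 with hd
    have hd0 : 0 < d := by
      rw [hd]
      split
      · exact (hWint i0 j0).1
      · have := (hWint i0 j0).2; linarith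
    -- leftover entropy sum
    set S : ℝ := ∑ p ∈ (Finset.univ : Finset (Fin m × Fin n)).erase p0,
        Hmax (κ:ℕ∞) (Z p.1 p.2) with hSdef
    have hS0 : 0 ≤ S :=
      Finset.sum_nonneg fun p _ => Hmax_nonneg hκ (hZIcc p.1 p.2).1 (hZIcc p.1 p.2).2
    have hFZ : F Z = S := by
      rw [hFprod Z, ← Finset.sum_erase_add _ _ (Finset.mem_univ p0), hSdef, hp0, hHz0, add_zero]
    -- choose t
    set t : ℝ := min (1/2) (Real.exp (-(S/d) - 1) / (((κ:ℝ)+1)*d)) with ht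
    have hkd : (0:ℝ) < ((κ:ℝ)+1)*d := mul_pos (by positivity) hd0
    have ht0 : 0 < t := lt_min (by norm_num) (div_pos (Real.exp_pos _) hkd)
    have ht12 : t ≤ 1/2 := min_le_left _ _
    have ht1 : t ≤ 1 := by linarith
    have hcond : ((κ:ℝ)+1)*(t*d) ≤ Real.exp (-(S/d) - 1) := by
      have h1 : t ≤ Real.exp (-(S/d) - 1) / (((κ:ℝ)+1)*d) := min_le_right _ _
      rw [le_div_iff₀ hkd] at h1
      nlinarith
    have htd0 : 0 < t*d := mul_pos ht0 hd0
    have htd1 : ((κ:ℝ)+1)*(t*d) ≤ 1 := by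
      apply hcond.trans
      rw [Real.exp_le_one_iff]
      have : 0 ≤ S/d := div_nonneg hS0 hd0.le
      linarith
    have htdκ : t*d ≤ (κ:ℝ) := by nlinarith
    -- the perturbed matrix
    obtain ⟨M, hM⟩ : ∃ M : Fin m → Fin n → ℝ, M = fun i j => (1-t) * Z i j + t * W i j :=
      ⟨_, rfl⟩
    have hMij : ∀ i j, M i j = (1-t) * Z i j + t * W i j := fun i j => by rw [hM]
    have hMP : M ∈ P := by rw [hM]; exact combo_mem_transport κ hZP hW ht0.le ht1
    -- gain at the bad coordinate
    have hgain : -(t*d) * Real.log (((κ:ℝ)+1)*(t*d)) ≤ Hmax (κ:ℕ∞) (M i0 j0) := by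
      rcases hcase with h | h
      · have hM0 : M i0 j0 = t*d := by
          rw [hMij, h, hd, if_pos h]; ring
        rw [hM0]
        exact Hmax_lb_near_zero hκ htd0 htd1
      · have hzne : ¬ (Z i0 j0 = 0) := by rw [h]; intro hc; rw [hc] at hκ1; norm_num at hκ1
        have hM0 : M i0 j0 = (κ:ℝ) - t*d := by
          rw [hMij, h, hd, if_neg hzne]; ring
        rw [hM0, Hmax_symm hκ htd0.le htdκ]
        exact Hmax_lb_near_zero hκ htd0 htd1
    -- the gain beats the loss
    have hlog : Real.log (((κ:ℝ)+1)*(t*d)) ≤ -(S/d) - 1 := by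
      calc Real.log (((κ:ℝ)+1)*(t*d)) ≤ Real.log (Real.exp (-(S/d) - 1)) :=
            Real.log_le_log (by positivity) hcond
        _ = -(S/d) - 1 := Real.log_exp _
    have hgain2 : t*S + t*d ≤ -(t*d) * Real.log (((κ:ℝ)+1)*(t*d)) := by
      have h1 : -(t*d) * Real.log (((κ:ℝ)+1)*(t*d)) ≥ -(t*d) * (-(S/d) - 1) := by
        nlinarith
      have h2 : -(t*d) * (-(S/d) - 1) = t*S + t*d := by
        field_simp
        ring
      linarith
    -- lower bound for the other coordinates
    have hrest : ∀ p ∈ (Finset.univ : Finset (Fin m × Fin n)).erase p0,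
        (1-t) * Hmax (κ:ℕ∞) (Z p.1 p.2) ≤ Hmax (κ:ℕ∞) (M p.1 p.2) := by
      intro p _
      have h1 := Hmax_combo hκ (hZIcc p.1 p.2) (hWIcc p.1 p.2) ht0.le ht1
      have h2 : 0 ≤ t * Hmax (κ:ℕ∞) (W p.1 p.2) :=
        mul_nonneg ht0.le (Hmax_nonneg hκ (hWIcc p.1 p.2).1 (hWIcc p.1 p.2).2)
      rw [hMij]
      linarith
    -- total
    have htotal : F Z < F M := by
      have h1 : F M = (∑ p ∈ (Finset.univ : Finset (Fin m × Fin n)).erase p0,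
          Hmax (κ:ℕ∞) (M p.1 p.2)) + Hmax (κ:ℕ∞) (M i0 j0) := by
        rw [hFprod M, ← Finset.sum_erase_add _ _ (Finset.mem_univ p0)]
      have h2 : (1-t) * S ≤ ∑ p ∈ (Finset.univ : Finset (Fin m × Fin n)).erase p0,
          Hmax (κ:ℕ∞) (M p.1 p.2) := by
        rw [hSdef, Finset.mul_sum]
        exact Finset.sum_le_sum hrest
      have h3 := hgain2.trans hgain
      rw [h1, hFZ]
      nlinarith
    exact absurd (hZmax' M hMP) (not_le.mpr htotal)
  refine ⟨Z, hZP, hZint, ?_⟩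
  -- uniqueness via strict concavity
  intro W' hW' hne
  obtain ⟨M, hM⟩ : ∃ M : Fin m → Fin n → ℝ,
      M = fun i j => (1-(1/2:ℝ)) * W' i j + (1/2:ℝ) * Z i j := ⟨_, rfl⟩
  have hMij : ∀ i j, M i j = (1-(1/2:ℝ)) * W' i j + (1/2:ℝ) * Z i j := fun i j => by rw [hM]
  have hMP : M ∈ P := by rw [hM]; exact combo_mem_transport κ hW' hZP (by norm_num) (by norm_num)
  have hW'Icc := hmemIcc W' hW'
  obtain ⟨pi0, hpne⟩ : ∃ p : Fin m × Fin n, W' p.1 p.2 ≠ Z p.1 p.2 := by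
    by_contra hc
    push_neg at hc
    exact hne (funext fun i => funext fun j => hc (i, j))
  have hstrict : F W' + F Z < 2 * F M := by
    rw [hFprod W', hFprod Z, hFprod M, ← Finset.sum_add_distrib, Finset.mul_sum]
    apply Finset.sum_lt_sum
    · intro p _
      have h1 := Hmax_strict_mid hκ (hW'Icc p.1 p.2) (hZIcc p.1 p.2)
      have h2 := Hmax_combo hκ (hW'Icc p.1 p.2) (hZIcc p.1 p.2) (by norm_num : (0:ℝ) ≤ 1/2)
        (by norm_num)
      rw [hMij]
      linarith
    · refine ⟨pi0, Finset.mem_univ _, ?_⟩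
      have h1 := Hmax_strict_mid hκ (hW'Icc pi0.1 pi0.2) (hZIcc pi0.1 pi0.2) hpne
      rw [hMij]
      have he : (1-(1/2:ℝ)) * W' pi0.1 pi0.2 + (1/2:ℝ) * Z pi0.1 pi0.2
          = (W' pi0.1 pi0.2 + Z pi0.1 pi0.2)/2 := by ring
      rw [he]
      linarith
  have hM_le : F M ≤ F Z := hZmax' M hMP
  have hWF : F W' < F Z := by linarith
  simpa [hF] using hWF
end
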